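/- arXiv:0802.3861 — 7 statements merged into one kernel-verified Lean document; each statement's English description precedes it below -/
import Mathlib

section
/- Let f, g be regular functions on B(0,R) with f(q) = Σₙ qⁿ aₙ, g(q) = Σₙ qⁿ bₙ, and define their regular product f*g(q) = Σₙ qⁿ cₙ with cₙ = Σ_{k=0}^{n} aₖ b_{n−k}. Then for every q ∈ B(0,R) with f(q) ≠ 0, one has f*g(q) = f(q) · g( f(q)⁻¹ q f(q) ). -/
open Quaternion Finset

set_option maxHeartbeats 1000000 in
/-- Coefficients of a convergent quaternionic power series are bounded
after rescaling by the radius. -/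
lemma coeff_bound_of_hasSum {x : ℍ[ℝ]} {a : ℕ → ℍ[ℝ]} {s : ℍ[ℝ]}
    (h : HasSum (fun n => x ^ n * a n) s) :
    ∃ C : ℝ, 0 ≤ C ∧ ∀ n, ‖x‖ ^ n * ‖a n‖ ≤ C := by
  have h0 : Filter.Tendsto (fun n => ‖x ^ n * a n‖) Filter.atTop (nhds 0) := by
    simpa using (h.summable.tendsto_atTop_zero.norm)
  obtain ⟨C, hC⟩ := h0.bddAbove_range
  refine ⟨C, le_trans (by positivity) (hC ⟨0, rfl⟩), fun n => ?_⟩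
  have := hC ⟨n, rfl⟩
  simpa [norm_mul, norm_pow] using this

set_option maxHeartbeats 1000000 in
/-- The regular product satisfies `f*g(q) = f(q) · g(f(q)⁻¹ q f(q))` wherever `f(q) ≠ 0`:
the series defining `f*g` converges at `q` to `f(q) * g(f(q)⁻¹ q f(q))`. -/
theorem regular_product_formula
    (R : ℝ) (a b : ℕ → ℍ[ℝ]) (f g : ℍ[ℝ] → ℍ[ℝ])
    (hf : ∀ q ∈ Metric.ball (0 : ℍ[ℝ]) R, HasSum (fun n => q ^ n * a n) (f q))
    (hg : ∀ q ∈ Metric.ball (0 : ℍ[ℝ]) R, HasSum (fun n => q ^ n * b n) (g q)) :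
    ∀ q ∈ Metric.ball (0 : ℍ[ℝ]) R, f q ≠ 0 →
      HasSum (fun n => q ^ n * ∑ k ∈ range (n + 1), a k * b (n - k))
        (f q * g ((f q)⁻¹ * q * f q)) := by
  intro q hq hfq
  have hqball := hq
  rw [Metric.mem_ball, dist_zero_right] at hq
  set c := f q with hc
  set p := c⁻¹ * q * c with hp
  have h0q : (0:ℝ) ≤ ‖q‖ := norm_nonneg q
  set r : ℝ := (‖q‖ + R) / 2 with hr
  have hqr : ‖q‖ < r := by rw [hr]; linarith
  have hrR : r < R := by rw [hr]; linarith
  have hr0 : 0 < r := lt_of_le_of_lt h0q hqr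
  have hrball : ((r : ℍ[ℝ])) ∈ Metric.ball (0:ℍ[ℝ]) R := by
    rw [Metric.mem_ball, dist_zero_right, Quaternion.norm_coe, Real.norm_eq_abs,
      abs_of_pos hr0]
    exact hrR
  have hnr : ‖(r : ℍ[ℝ])‖ = r := by
    rw [Quaternion.norm_coe, Real.norm_eq_abs, abs_of_pos hr0]
  obtain ⟨Ca, hCa0, hCa⟩ := coeff_bound_of_hasSum (hf _ hrball)
  obtain ⟨Cb, hCb0, hCb⟩ := coeff_bound_of_hasSum (hg _ hrball)
  rw [hnr] at hCa hCb
  set t : ℝ := ‖q‖ / r with ht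
  have ht0 : 0 ≤ t := div_nonneg h0q hr0.le
  have ht1 : t < 1 := (div_lt_one hr0).2 hqr
  have hqt : ‖q‖ = t * r := by rw [ht, div_mul_cancel₀ _ hr0.ne']
  -- the double-indexed family
  set F : ℕ × ℕ → ℍ[ℝ] := fun mk => q ^ (mk.1 + mk.2) * a mk.2 * b mk.1 with hF
  -- summability of F
  have hFsumm : Summable F := by
    apply Summable.of_norm_bounded (g := fun mk : ℕ × ℕ => (Cb * t ^ mk.1) * (Ca * t ^ mk.2))
    · exact ((summable_geometric_of_lt_one ht0 ht1).mul_left Cb).mul_of_nonneg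
        ((summable_geometric_of_lt_one ht0 ht1).mul_left Ca)
        (fun m => mul_nonneg hCb0 (pow_nonneg ht0 m))
        (fun k => mul_nonneg hCa0 (pow_nonneg ht0 k))
    · rintro ⟨m, k⟩
      have : ‖F (m, k)‖ = (‖q‖ ^ m * ‖b m‖) * (‖q‖ ^ k * ‖a k‖) := by
        simp [hF, norm_mul, norm_pow, pow_add]; ring
      rw [this, hqt]
      have h1 : (t*r) ^ m * ‖b m‖ = t ^ m * (r ^ m * ‖b m‖) := by rw [mul_pow]; ring
      have h2 : (t*r) ^ k * ‖a k‖ = t ^ k * (r ^ k * ‖a k‖) := by rw [mul_pow]; ring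
      rw [h1, h2]
      have := mul_le_mul (mul_le_mul_of_nonneg_left (hCb m) (pow_nonneg ht0 m))
        (mul_le_mul_of_nonneg_left (hCa k) (pow_nonneg ht0 k))
        (mul_nonneg (pow_nonneg ht0 k) (mul_nonneg (pow_nonneg hr0.le k) (norm_nonneg _)))
        (mul_nonneg (pow_nonneg ht0 m) hCb0)
      calc t ^ m * (r ^ m * ‖b m‖) * (t ^ k * (r ^ k * ‖a k‖))
          ≤ (t ^ m * Cb) * (t ^ k * Ca) := this
        _ = Cb * t ^ m * (Ca * t ^ k) := by ring
  -- p is in the ball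
  have hnp : ‖p‖ = ‖q‖ := by
    rw [hp, norm_mul, norm_mul, norm_inv]
    have : ‖c‖ ≠ 0 := norm_ne_zero_iff.2 hfq
    field_simp
  have hpball : p ∈ Metric.ball (0:ℍ[ℝ]) R := by
    rw [Metric.mem_ball, dist_zero_right, hnp]; exact hq
  -- conjugation identity
  have hconj : ∀ m : ℕ, c * p ^ m = q ^ m * c := by
    intro m
    have key : p ^ m = c⁻¹ * q ^ m * c := by
      induction m with
      | zero => simp [inv_mul_cancel₀ hfq]
      | succ m ih =>
        rw [pow_succ, pow_succ, ih, hp]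
        simp only [mul_assoc, mul_inv_cancel_left₀ hfq]
    rw [key, ← mul_assoc, ← mul_assoc, mul_inv_cancel₀ hfq, one_mul]
  -- the outer sum
  have houter : HasSum (fun m => q ^ m * c * b m) (c * g p) := by
    have h1 := (hg p hpball).mul_left c
    have heq : (fun m => c * (p ^ m * b m)) = fun m => q ^ m * c * b m :=
      funext fun m => by rw [← mul_assoc, hconj]
    rwa [heq] at h1
  -- fiberwise sums of F
  have hfib : ∀ m : ℕ, HasSum (fun k => F (m, k)) (q ^ m * c * b m) := by
    intro m
    have h1 := ((hf q hqball).mul_left (q ^ m)).mul_right (b m)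
    have heq : (fun k => q ^ m * (q ^ k * a k) * b m) = fun k => F (m, k) :=
      funext fun k => by simp only [hF, pow_add]; noncomm_ring
    rwa [heq, ← hc] at h1
  -- F sums to c * g p
  have hFsum : HasSum F (c * g p) := by
    have hS := hFsumm.hasSum
    have h2 : HasSum (fun m => q ^ m * c * b m) (∑' x, F x) :=
      hS.prod_fiberwise hfib
    rwa [h2.unique houter] at hS
  -- regroup along antidiagonals
  have hsig : HasSum (F ∘ Finset.HasAntidiagonal.sigmaAntidiagonalEquivProd) (c * g p) :=
    (Equiv.hasSum_iff _).2 hFsum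
  have hmain : HasSum (fun n => ∑ kl ∈ antidiagonal n, F kl) (c * g p) := by
    refine hsig.sigma fun n => ?_
    rw [← Finset.sum_finset_coe]
    exact hasSum_fintype _
  have hterm : ∀ n, ∑ kl ∈ antidiagonal n, F kl
      = q ^ n * ∑ k ∈ range (n + 1), a k * b (n - k) := by
    intro n
    have h1 : ∑ kl ∈ antidiagonal n, F kl
        = ∑ kl ∈ antidiagonal n, q ^ n * (a kl.2 * b kl.1) := by
      refine Finset.sum_congr rfl fun kl hkl => ?_
      rw [Finset.HasAntidiagonal.mem_antidiagonal] at hkl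
      simp only [hF]
      rw [hkl, mul_assoc]
    rw [h1, ← Finset.mul_sum]
    congr 1
    rw [Finset.Nat.sum_antidiagonal_eq_sum_range_succ_mk (fun kl => a kl.2 * b kl.1) n]
    rw [← Finset.sum_range_reflect (fun k => a k * b (n - k)) (n + 1)]
    refine Finset.sum_congr rfl fun k hk => ?_
    rw [Finset.mem_range] at hk
    simp only []
    have e1 : n + 1 - 1 - k = n - k := by omega
    rw [e1, Nat.sub_sub_self (by omega : k ≤ n)]
  have hfin : (fun n => ∑ kl ∈ antidiagonal n, F kl)
      = fun n => q ^ n * ∑ k ∈ range (n + 1), a k * b (n - k) := funext hterm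
  rwa [hfin] at hmain
end

section
/- Let f be a regular function on B(0,R), f^c its regular conjugate and f^s its symmetrization, and define T_f(q) = f^c(q)⁻¹ q f^c(q) for q ∈ B(0,R) ∖ Z_{f^s}. Then for all such q, f^{-*}(q) = f^s(q)⁻¹ f^c(q) = ( f(T_f(q)) )⁻¹. -/
open Quaternion Finset

/-- With `T_f(q) = f^c(q)⁻¹ q f^c(q)`, the reciprocal satisfies
`f^{-*}(q) = f^s(q)⁻¹ f^c(q) = (f(T_f(q)))⁻¹` on `B(0,R) ∖ Z_{f^s}`. -/
theorem reciprocal_eq_inverse_at_transform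
    (R : ℝ) (a : ℕ → ℍ[ℝ]) (f fc fs : ℍ[ℝ] → ℍ[ℝ])
    (hf : ∀ q ∈ Metric.ball (0 : ℍ[ℝ]) R, HasSum (fun n => q ^ n * a n) (f q))
    (hfc : ∀ q ∈ Metric.ball (0 : ℍ[ℝ]) R,
      HasSum (fun n => q ^ n * star (a n)) (fc q))
    (hfs : ∀ q ∈ Metric.ball (0 : ℍ[ℝ]) R,
      HasSum (fun n => q ^ n * ∑ k ∈ range (n + 1), star (a k) * a (n - k)) (fs q)) :
    ∀ q ∈ Metric.ball (0 : ℍ[ℝ]) R, fs q ≠ 0 →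
      fc q ≠ 0 ∧ (fs q)⁻¹ * fc q = (f ((fc q)⁻¹ * q * fc q))⁻¹ := by
  intro q hq hs
  have hqR : ‖q‖ < R := by simpa [Metric.mem_ball, dist_zero_right] using hq
  set r : ℝ := (‖q‖ + R) / 2 with hr
  have hr1 : ‖q‖ < r := by rw [hr]; linarith
  have hr2 : r < R := by rw [hr]; linarith
  have hr0 : 0 < r := lt_of_le_of_lt (norm_nonneg q) hr1
  -- summability of the coefficients at radius r gives a geometric bound
  have hrball : ((r : ℍ[ℝ])) ∈ Metric.ball (0 : ℍ[ℝ]) R := by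
    simp only [Metric.mem_ball, dist_zero_right, Quaternion.norm_coe,
      Real.norm_eq_abs, abs_of_pos hr0]
    exact hr2
  have hsum_r : Summable (fun n => ((r : ℍ[ℝ])) ^ n * a n) := (hf _ hrball).summable
  have htend : Filter.Tendsto (fun n => ‖((r : ℍ[ℝ])) ^ n * a n‖)
      Filter.atTop (nhds 0) := by
    simpa using hsum_r.tendsto_atTop_zero.norm
  obtain ⟨C, hC⟩ := htend.bddAbove_range
  have hC' : ∀ n, r ^ n * ‖a n‖ ≤ C := by
    intro n
    have : ‖((r : ℍ[ℝ])) ^ n * a n‖ ≤ C := hC ⟨n, rfl⟩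
    simpa [norm_mul, norm_pow, Quaternion.norm_coe, Real.norm_eq_abs,
      abs_of_pos hr0] using this
  set g : ℕ → ℝ := fun n => ‖q‖ ^ n * ‖a n‖ with hg
  have hg0 : ∀ n, 0 ≤ g n := fun n => by positivity
  have hgle : ∀ n, g n ≤ C * (‖q‖ / r) ^ n := by
    intro n
    have h1 : ‖a n‖ ≤ C / r ^ n := by
      rw [le_div_iff₀ (by positivity)]
      calc ‖a n‖ * r ^ n = r ^ n * ‖a n‖ := by ring
        _ ≤ C := hC' n
    calc g n = ‖q‖ ^ n * ‖a n‖ := rfl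
      _ ≤ ‖q‖ ^ n * (C / r ^ n) := by
          exact mul_le_mul_of_nonneg_left h1 (by positivity)
      _ = C * (‖q‖ / r) ^ n := by
          rw [div_pow ‖q‖ r n, mul_div_assoc', mul_div_assoc', mul_comm C]
  have hgsum : Summable g := by
    refine Summable.of_nonneg_of_le hg0 hgle ?_
    exact (summable_geometric_of_lt_one (by positivity)
      (by rw [div_lt_one hr0]; exact hr1)).mul_left C
  -- the double series
  set F : ℕ × ℕ → ℍ[ℝ] := fun p => q ^ (p.1 + p.2) * (star (a p.2) * a p.1) with hF
  have hFnorm : ∀ p : ℕ × ℕ, ‖F p‖ = g p.1 * g p.2 := by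
    rintro ⟨j, k⟩
    simp only [hF, hg, norm_mul, norm_pow, Quaternion.norm_star, pow_add]
    ring
  have hFsum : Summable F := by
    refine Summable.of_norm ?_
    refine (summable_congr fun p => (hFnorm p)).mpr ?_
    exact hgsum.mul_of_nonneg hgsum hg0 hg0
  obtain ⟨S, hS⟩ := hFsum
  -- fiberwise over the first coordinate
  have hfib : ∀ j : ℕ, HasSum (fun k => F (j, k)) (q ^ j * (fc q * a j)) := by
    intro j
    have h1 : HasSum (fun k => q ^ j * (q ^ k * star (a k) * a j))
        (q ^ j * (fc q * a j)) := (((hfc q hq).mul_right (a j)).mul_left (q ^ j))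
    refine h1.congr_fun fun k => ?_
    simp only [hF, pow_add, mul_assoc]
  have hrow : HasSum (fun j => q ^ j * (fc q * a j)) S := hS.prod_fiberwise hfib
  -- grouping along antidiagonals gives `fs q`, hence `S = fs q`
  have hsig : HasSum (F ∘ Finset.HasAntidiagonal.sigmaAntidiagonalEquivProd) S :=
    (Equiv.hasSum_iff _).mpr hS
  have hdiag : HasSum
      (fun n => q ^ n * ∑ k ∈ range (n + 1), star (a k) * a (n - k)) S := by
    refine hsig.sigma fun n => ?_
    have hval : (∑ c : (Finset.HasAntidiagonal.antidiagonal n : Finset (ℕ × ℕ)), F (c : ℕ × ℕ))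
        = q ^ n * ∑ k ∈ range (n + 1), star (a k) * a (n - k) := by
      rw [Finset.sum_coe_sort (Finset.HasAntidiagonal.antidiagonal n) (fun p => F p)]
      have h2 : ∀ p ∈ Finset.HasAntidiagonal.antidiagonal n, F p = q ^ n * (star (a p.2) * a p.1) := by
        rintro ⟨i, j⟩ hp
        rw [Finset.HasAntidiagonal.mem_antidiagonal] at hp
        simp only [hF, hp]
      rw [Finset.sum_congr rfl h2, ← Finset.mul_sum]
      congr 1
      rw [Finset.Nat.sum_antidiagonal_eq_sum_range_succ_mk]
      have hrefl := Finset.sum_range_reflect (fun k => star (a k) * a (n - k)) (n + 1)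
      rw [← hrefl]
      refine Finset.sum_congr rfl fun k hk => ?_
      rw [Finset.mem_range] at hk
      have hk' : k ≤ n := Nat.lt_succ_iff.mp hk
      have e1 : n + 1 - 1 - k = n - k := by omega
      have e2 : n - (n - k) = k := by omega
      rw [e1, e2]
    exact hval ▸ (hasSum_fintype fun c : (Finset.HasAntidiagonal.antidiagonal n : Finset (ℕ × ℕ)) =>
      F (c : ℕ × ℕ))
  have hSfs : S = fs q := hdiag.unique (hfs q hq)
  rw [hSfs] at hrow
  -- fc q ≠ 0
  have hfc0 : fc q ≠ 0 := by
    intro h0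
    have : HasSum (fun _ : ℕ => (0 : ℍ[ℝ])) (fs q) := by
      refine hrow.congr_fun fun j => by simp [h0]
    exact hs (this.unique hasSum_zero)
  refine ⟨hfc0, ?_⟩
  -- the transformed point
  set T : ℍ[ℝ] := (fc q)⁻¹ * q * fc q with hT
  have hnfc : ‖fc q‖ ≠ 0 := norm_ne_zero_iff.mpr hfc0
  have hTn : ‖T‖ = ‖q‖ := by
    rw [hT, norm_mul, norm_mul, norm_inv, mul_comm ‖fc q‖⁻¹ ‖q‖, mul_assoc,
      inv_mul_cancel₀ hnfc, mul_one]
  have hTball : T ∈ Metric.ball (0 : ℍ[ℝ]) R := by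
    simp [Metric.mem_ball, dist_zero_right, hTn, hqR]
  have hTpow : ∀ j : ℕ, T ^ j = (fc q)⁻¹ * q ^ j * fc q := by
    intro j
    induction j with
    | zero => simp [inv_mul_cancel₀ hfc0]
    | succ j ih =>
      rw [pow_succ, ih, hT, pow_succ]
      simp only [mul_assoc]
      rw [mul_inv_cancel_left₀ hfc0]
  have hfT : HasSum (fun j => fc q * (T ^ j * a j)) (fc q * f T) :=
    (hf T hTball).mul_left (fc q)
  have hfT' : HasSum (fun j => q ^ j * (fc q * a j)) (fc q * f T) := by
    refine hfT.congr_fun fun j => ?_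
    rw [hTpow j]
    simp only [← mul_assoc, mul_inv_cancel₀ hfc0, one_mul]
  have hkey : fc q * f T = fs q := hfT'.unique hrow
  have hfT0 : f T ≠ 0 := by
    intro h0
    rw [h0, mul_zero] at hkey
    exact hs hkey.symm
  have hfTval : f T = (fc q)⁻¹ * fs q := by
    rw [← hkey, ← mul_assoc, inv_mul_cancel₀ hfc0, one_mul]
  rw [hfTval, mul_inv_rev, inv_inv]
end

section
/- Let f be a regular function on B(0,R) and set T_f(q) = f^c(q)⁻¹ q f^c(q), T_{f^c}(q) = f(q)⁻¹ q f(q), defined on B(0,R) ∖ Z_{f^s}. Then T_{f^c} ∘ T_f = id and T_f ∘ T_{f^c} = id on B(0,R) ∖ Z_{f^s}; in particular T_f is a bijection of B(0,R) ∖ Z_{f^s} onto itself. -/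
open Quaternion Finset

namespace TransformAux

local notation "H" => Quaternion ℝ

lemma conj_pow (c q : H) (hc : c ≠ 0) (n : ℕ) :
    (c⁻¹ * q * c) ^ n = c⁻¹ * q ^ n * c := by
  induction n with
  | zero => simp [inv_mul_cancel₀ hc]
  | succ n ih =>
      rw [pow_succ, ih, pow_succ]
      simp only [mul_assoc]
      rw [show c * (c⁻¹ * (q * c)) = q * c by
        rw [← mul_assoc, mul_inv_cancel₀ hc, one_mul]]

lemma sum_reflect_pairs {M : Type*} [AddCommMonoid M] (F : ℕ → ℕ → M) (n : ℕ) :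
    ∑ k ∈ range (n + 1), F k (n - k) = ∑ k ∈ range (n + 1), F (n - k) k := by
  rw [← Finset.sum_range_reflect (fun j => F (n - j) j) (n + 1)]
  refine Finset.sum_congr rfl fun j hj => ?_
  rw [Finset.mem_range] at hj
  have h1 : n + 1 - 1 - j = n - j := by omega
  have h2 : n - (n - j) = j := by omega
  rw [h1, h2]

set_option maxHeartbeats 1600000 in
/-- The core double-sum lemma. -/
lemma core (q : H) (u v : ℕ → H) (g s : H)
    (hg : HasSum (fun n => q ^ n * u n) g)
    (hh : Summable (fun n => q ^ n * v n))
    (hs : HasSum (fun n => q ^ n * ∑ k ∈ range (n + 1), u k * v (n - k)) s) :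
    HasSum (fun m => q ^ m * g * v m) s := by
  set F : ℕ × ℕ → H := fun p => q ^ (p.1 + p.2) * (u p.1 * v p.2) with hF
  have hsumF : Summable F := by
    apply Summable.of_norm
    have h1 : Summable fun n => ‖q ^ n * u n‖ := summable_norm_iff.mpr hg.summable
    have h2 : Summable fun n => ‖q ^ n * v n‖ := summable_norm_iff.mpr hh
    have := h1.mul_of_nonneg h2 (fun n => norm_nonneg _) (fun n => norm_nonneg _)
    refine this.congr fun p => ?_
    simp only [hF, norm_mul, norm_pow, pow_add]
    ring
  obtain ⟨S, hS⟩ := hsumF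
  have hSsig : HasSum (F ∘ Finset.HasAntidiagonal.sigmaAntidiagonalEquivProd) S :=
    (Equiv.hasSum_iff _).mpr hS
  have hdiag : HasSum (fun n => q ^ n * ∑ k ∈ range (n + 1), u k * v (n - k)) S := by
    refine HasSum.sigma hSsig fun n => ?_
    have h0 : ∑ p ∈ antidiagonal n, F p
        = q ^ n * ∑ k ∈ range (n + 1), u k * v (n - k) := by
      rw [Finset.mul_sum,
        ← Finset.Nat.sum_antidiagonal_eq_sum_range_succ (fun k l => q ^ n * (u k * v l)) n]
      refine Finset.sum_congr rfl fun p hp => ?_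
      rw [Finset.HasAntidiagonal.mem_antidiagonal] at hp
      simp [hF, hp]
    have hfin : HasSum (fun c : (antidiagonal n : Finset (ℕ × ℕ)) => F (c : ℕ × ℕ))
        (∑ p ∈ antidiagonal n, F p) := by
      have := hasSum_fintype (fun c : (antidiagonal n : Finset (ℕ × ℕ)) => F (c : ℕ × ℕ))
      rwa [Finset.sum_coe_sort] at this
    rw [h0] at hfin
    exact hfin
  have hSs : S = s := hdiag.unique hs
  subst hSs
  have hswap : HasSum (fun p : ℕ × ℕ => F p.swap) S :=
    (Equiv.prodComm ℕ ℕ).hasSum_iff.mpr hS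
  refine HasSum.prod_fiberwise hswap fun m => ?_
  have h3 : HasSum (fun k => q ^ m * (q ^ k * u k) * v m) (q ^ m * g * v m) :=
    (hg.mul_left (q ^ m)).mul_right (v m)
  refine h3.congr_fun fun k => ?_
  show q ^ (k + m) * (u k * v m) = q ^ m * (q ^ k * u k) * v m
  rw [add_comm, pow_add]
  simp [mul_assoc]

lemma star_b (a : ℕ → H) (n : ℕ) :
    star (∑ k ∈ range (n + 1), star (a k) * a (n - k))
      = ∑ k ∈ range (n + 1), star (a k) * a (n - k) := by
  rw [star_sum]
  calc ∑ k ∈ range (n + 1), star (star (a k) * a (n - k))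
      = ∑ k ∈ range (n + 1), star (a (n - k)) * a k := by
        refine Finset.sum_congr rfl fun k _ => ?_
        rw [star_mul, star_star]
    _ = ∑ k ∈ range (n + 1), star (a k) * a (n - k) :=
        (sum_reflect_pairs (fun i j => star (a i) * a j) n).symm

lemma re_sum (s : Finset ℕ) (f : ℕ → H) : (∑ k ∈ s, f k).re = ∑ k ∈ s, (f k).re := by
  induction s using Finset.cons_induction with
  | empty => simp
  | cons a s ha ih => rw [Finset.sum_cons, Finset.sum_cons, Quaternion.re_add, ih]

lemma b_central (a : ℕ → H) (n : ℕ) (x : H) :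
    Commute x (∑ k ∈ range (n + 1), star (a k) * a (n - k)) := by
  have hreal : (∑ k ∈ range (n + 1), star (a k) * a (n - k))
      = ((∑ k ∈ range (n + 1), star (a k) * a (n - k)).re : H) :=
    Quaternion.star_eq_self.mp (star_b a n)
  rw [hreal]
  exact (Quaternion.coe_commute _ x).symm

lemma b_swap (a : ℕ → H) (n : ℕ) :
    ∑ k ∈ range (n + 1), a k * star (a (n - k))
      = ∑ k ∈ range (n + 1), star (a k) * a (n - k) := by
  have hstard : star (∑ k ∈ range (n + 1), a k * star (a (n - k)))
      = ∑ k ∈ range (n + 1), a k * star (a (n - k)) := by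
    rw [star_sum]
    calc ∑ k ∈ range (n + 1), star (a k * star (a (n - k)))
        = ∑ k ∈ range (n + 1), a (n - k) * star (a k) := by
          refine Finset.sum_congr rfl fun k _ => ?_
          rw [star_mul, star_star]
      _ = ∑ k ∈ range (n + 1), a k * star (a (n - k)) :=
          (sum_reflect_pairs (fun i j => a i * star (a j)) n).symm
  have hd : (∑ k ∈ range (n + 1), a k * star (a (n - k)))
      = ((∑ k ∈ range (n + 1), a k * star (a (n - k))).re : H) :=
    Quaternion.star_eq_self.mp hstard
  have hb : (∑ k ∈ range (n + 1), star (a k) * a (n - k))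
      = ((∑ k ∈ range (n + 1), star (a k) * a (n - k)).re : H) :=
    Quaternion.star_eq_self.mp (star_b a n)
  have hre : (∑ k ∈ range (n + 1), a k * star (a (n - k))).re
      = (∑ k ∈ range (n + 1), star (a k) * a (n - k)).re := by
    rw [re_sum, re_sum]
    calc ∑ k ∈ range (n + 1), (a k * star (a (n - k))).re
        = ∑ k ∈ range (n + 1), (star (a (n - k)) * a k).re := by
          refine Finset.sum_congr rfl fun k _ => ?_
          simp [Quaternion.re_mul]; ring
      _ = ∑ k ∈ range (n + 1), (star (a k) * a (n - k)).re :=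
          sum_reflect_pairs (fun i j => (star (a j) * a i).re) n
  rw [hd, hb, hre]

/-- The main one-sided lemma. -/
lemma main_side (R : ℝ) (u v : ℕ → H) (g h s : H → H)
    (hg : ∀ q ∈ Metric.ball (0 : H) R, HasSum (fun n => q ^ n * u n) (g q))
    (hh : ∀ q ∈ Metric.ball (0 : H) R, HasSum (fun n => q ^ n * v n) (h q))
    (hs : ∀ q ∈ Metric.ball (0 : H) R,
      HasSum (fun n => q ^ n * ∑ k ∈ range (n + 1), u k * v (n - k)) (s q))
    (hb : ∀ n (x : H), Commute x (∑ k ∈ range (n + 1), u k * v (n - k)))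
    (q : H) (hq : q ∈ Metric.ball (0 : H) R) (hsq : s q ≠ 0) :
    g q ≠ 0 ∧ (g q)⁻¹ * q * g q ∈ Metric.ball (0 : H) R ∧
      s ((g q)⁻¹ * q * g q) = (g q)⁻¹ * s q * g q ∧
      h ((g q)⁻¹ * q * g q) = (g q)⁻¹ * s q ∧
      (h ((g q)⁻¹ * q * g q))⁻¹ * ((g q)⁻¹ * q * g q) *
        h ((g q)⁻¹ * q * g q) = q := by
  have hcore : HasSum (fun m => q ^ m * g q * v m) (s q) :=
    core q u v (g q) (s q) (hg q hq) (hh q hq).summable (hs q hq)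
  have hc : g q ≠ 0 := by
    intro h0
    exact hsq ((hasSum_zero.congr_fun fun m => by simp [h0]).unique hcore).symm
  set c := g q with hcdef
  have hq1 : ∀ x : H, c * (c⁻¹ * x) = x := fun x => by
    rw [← mul_assoc, mul_inv_cancel₀ hc, one_mul]
  set T := c⁻¹ * q * c with hTdef
  have hT : T ∈ Metric.ball (0 : H) R := by
    rw [Metric.mem_ball, dist_zero_right] at hq ⊢
    have hcn : ‖c‖ ≠ 0 := norm_ne_zero_iff.mpr hc
    have : ‖T‖ = ‖q‖ := by
      rw [hTdef, norm_mul, norm_mul, norm_inv, mul_comm, ← mul_assoc,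
        mul_inv_cancel₀ hcn, one_mul]
    rwa [this]
  have hTpow : ∀ n, T ^ n = c⁻¹ * q ^ n * c := fun n => conj_pow c q hc n
  have hsT : s T = c⁻¹ * s q * c := by
    have h1 : HasSum (fun n => c⁻¹ * (q ^ n *
        ∑ k ∈ range (n + 1), u k * v (n - k)) * c) (c⁻¹ * s q * c) :=
      ((hs q hq).mul_left c⁻¹).mul_right c
    have h2 : HasSum (fun n => T ^ n * ∑ k ∈ range (n + 1), u k * v (n - k))
        (c⁻¹ * s q * c) := by
      refine h1.congr_fun fun n => ?_
      rw [hTpow n, mul_assoc (c⁻¹ * q ^ n) c, (hb n c).eq]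
      simp [mul_assoc]
    exact (hs T hT).unique h2
  have hhT : h T = c⁻¹ * s q := by
    have h1 : HasSum (fun m => c * (T ^ m * v m)) (c * h T) := (hh T hT).mul_left c
    have h2 : HasSum (fun m => q ^ m * c * v m) (c * h T) := by
      refine h1.congr_fun fun m => ?_
      rw [hTpow m]
      simp only [mul_assoc]
      rw [hq1]
    have h3 : c * h T = s q := h2.unique hcore
    rw [← h3, ← mul_assoc, inv_mul_cancel₀ hc, one_mul]
  have hcomm : q * s q = s q * q := by
    have h1 : HasSum (fun n => q * (q ^ n *
        ∑ k ∈ range (n + 1), u k * v (n - k))) (q * s q) := (hs q hq).mul_left q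
    have h2 : HasSum (fun n => (q ^ n *
        ∑ k ∈ range (n + 1), u k * v (n - k)) * q) (s q * q) := (hs q hq).mul_right q
    refine h1.unique (h2.congr_fun fun n => ?_)
    rw [← mul_assoc, ← pow_succ']
    rw [mul_assoc, ← (hb n q).eq, ← mul_assoc, ← pow_succ]
  refine ⟨hc, hT, hsT, hhT, ?_⟩
  rw [hhT, hTdef, mul_inv_rev, inv_inv]
  simp only [mul_assoc]
  rw [hq1, hq1, hcomm, ← mul_assoc, inv_mul_cancel₀ hsq, one_mul]

end TransformAux

/-- The transformations `T_f(q) = f^c(q)⁻¹ q f^c(q)` and `T_{f^c}(q) = f(q)⁻¹ q f(q)`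
are mutually inverse bijections of `B(0,R) ∖ Z_{f^s}` onto itself. -/
theorem transform_mutual_inverses
    (R : ℝ) (a : ℕ → ℍ[ℝ]) (f fc fs : ℍ[ℝ] → ℍ[ℝ])
    (hf : ∀ q ∈ Metric.ball (0 : ℍ[ℝ]) R, HasSum (fun n => q ^ n * a n) (f q))
    (hfc : ∀ q ∈ Metric.ball (0 : ℍ[ℝ]) R,
      HasSum (fun n => q ^ n * star (a n)) (fc q))
    (hfs : ∀ q ∈ Metric.ball (0 : ℍ[ℝ]) R,
      HasSum (fun n => q ^ n * ∑ k ∈ range (n + 1), star (a k) * a (n - k)) (fs q)) :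
    (∀ q ∈ Metric.ball (0 : ℍ[ℝ]) R, fs q ≠ 0 →
      ((fc q)⁻¹ * q * fc q ∈ Metric.ball (0 : ℍ[ℝ]) R ∧
        fs ((fc q)⁻¹ * q * fc q) ≠ 0 ∧
        (f ((fc q)⁻¹ * q * fc q))⁻¹ * ((fc q)⁻¹ * q * fc q) *
          f ((fc q)⁻¹ * q * fc q) = q)) ∧
    (∀ q ∈ Metric.ball (0 : ℍ[ℝ]) R, fs q ≠ 0 →
      ((f q)⁻¹ * q * f q ∈ Metric.ball (0 : ℍ[ℝ]) R ∧
        fs ((f q)⁻¹ * q * f q) ≠ 0 ∧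
        (fc ((f q)⁻¹ * q * f q))⁻¹ * ((f q)⁻¹ * q * f q) *
          fc ((f q)⁻¹ * q * f q) = q)) ∧
    Set.BijOn (fun q => (fc q)⁻¹ * q * fc q)
      {q ∈ Metric.ball (0 : ℍ[ℝ]) R | fs q ≠ 0}
      {q ∈ Metric.ball (0 : ℍ[ℝ]) R | fs q ≠ 0} := by
  have hfs' : ∀ q ∈ Metric.ball (0 : ℍ[ℝ]) R,
      HasSum (fun n => q ^ n * ∑ k ∈ range (n + 1), a k * star (a (n - k))) (fs q) := by
    intro q hq
    refine (hfs q hq).congr_fun fun n => ?_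
    rw [TransformAux.b_swap a n]
  have hb1 : ∀ n (x : ℍ[ℝ]), Commute x (∑ k ∈ range (n + 1), star (a k) * a (n - k)) :=
    TransformAux.b_central a
  have hb2 : ∀ n (x : ℍ[ℝ]), Commute x (∑ k ∈ range (n + 1), a k * star (a (n - k))) := by
    intro n x
    rw [TransformAux.b_swap a n]
    exact hb1 n x
  have side1 := fun q hq hsq =>
    TransformAux.main_side R (fun n => star (a n)) a fc f fs hfc hf hfs hb1 q hq hsq
  have side2 := fun q hq hsq =>
    TransformAux.main_side R a (fun n => star (a n)) f fc fs hf hfc hfs' hb2 q hq hsq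
  have part1 : ∀ q ∈ Metric.ball (0 : ℍ[ℝ]) R, fs q ≠ 0 →
      ((fc q)⁻¹ * q * fc q ∈ Metric.ball (0 : ℍ[ℝ]) R ∧
        fs ((fc q)⁻¹ * q * fc q) ≠ 0 ∧
        (f ((fc q)⁻¹ * q * fc q))⁻¹ * ((fc q)⁻¹ * q * fc q) *
          f ((fc q)⁻¹ * q * fc q) = q) := by
    intro q hq hsq
    obtain ⟨hc, hT, hsT, _, hinv⟩ := side1 q hq hsq
    refine ⟨hT, ?_, hinv⟩
    rw [hsT]
    exact mul_ne_zero (mul_ne_zero (inv_ne_zero hc) hsq) hc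
  have part2 : ∀ q ∈ Metric.ball (0 : ℍ[ℝ]) R, fs q ≠ 0 →
      ((f q)⁻¹ * q * f q ∈ Metric.ball (0 : ℍ[ℝ]) R ∧
        fs ((f q)⁻¹ * q * f q) ≠ 0 ∧
        (fc ((f q)⁻¹ * q * f q))⁻¹ * ((f q)⁻¹ * q * f q) *
          fc ((f q)⁻¹ * q * f q) = q) := by
    intro q hq hsq
    obtain ⟨hc, hT, hsT, _, hinv⟩ := side2 q hq hsq
    refine ⟨hT, ?_, hinv⟩
    rw [hsT]
    exact mul_ne_zero (mul_ne_zero (inv_ne_zero hc) hsq) hc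
  refine ⟨part1, part2, ?_⟩
  have hmaps1 : Set.MapsTo (fun q => (fc q)⁻¹ * q * fc q)
      {q ∈ Metric.ball (0 : ℍ[ℝ]) R | fs q ≠ 0}
      {q ∈ Metric.ball (0 : ℍ[ℝ]) R | fs q ≠ 0} := by
    rintro q ⟨hq, hsq⟩
    obtain ⟨hT, hsT, _⟩ := part1 q hq hsq
    exact ⟨hT, hsT⟩
  have hmaps2 : Set.MapsTo (fun q => (f q)⁻¹ * q * f q)
      {q ∈ Metric.ball (0 : ℍ[ℝ]) R | fs q ≠ 0}
      {q ∈ Metric.ball (0 : ℍ[ℝ]) R | fs q ≠ 0} := by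
    rintro q ⟨hq, hsq⟩
    obtain ⟨hT, hsT, _⟩ := part2 q hq hsq
    exact ⟨hT, hsT⟩
  refine Set.InvOn.bijOn ⟨?_, ?_⟩ hmaps1 hmaps2
  · rintro q ⟨hq, hsq⟩
    exact (part1 q hq hsq).2.2
  · rintro q ⟨hq, hsq⟩
    exact (part2 q hq hsq).2.2
end

section
/- (Identity Principle) Let Ω ⊆ ℍ be a domain intersecting the real axis such that Ω ∩ L_I is connected for every imaginary unit I ∈ 𝕊. If f, g : Ω → ℍ are regular functions which coincide on Ω ∩ ℝ, then f = g on Ω. -/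
open Quaternion

/-- Cullen regularity: the restriction of `f` to each slice `L_I = ℝ + Iℝ` satisfies
the Cauchy–Riemann equation `∂f/∂y = I ∂f/∂x`. -/
def SliceRegularOn (Ω : Set ℍ[ℝ]) (f : ℍ[ℝ] → ℍ[ℝ]) : Prop :=
  ∀ I : ℍ[ℝ], I ^ 2 = -1 → ∀ x y : ℝ, (x : ℍ[ℝ]) + y • I ∈ Ω →
    DifferentiableAt ℝ (fun p : ℝ × ℝ => f ((p.1 : ℍ[ℝ]) + p.2 • I)) (x, y) ∧
    fderiv ℝ (fun p : ℝ × ℝ => f ((p.1 : ℍ[ℝ]) + p.2 • I)) (x, y) (0, 1) =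
      I * fderiv ℝ (fun p : ℝ × ℝ => f ((p.1 : ℍ[ℝ]) + p.2 • I)) (x, y) (1, 0)

/-- The complex line `L_I = ℝ + Iℝ`. -/
def complexLine (I : ℍ[ℝ]) : Set ℍ[ℝ] := {q | ∃ x y : ℝ, q = (x : ℍ[ℝ]) + y • I}

lemma aux_re_normSq {I : ℍ[ℝ]} (hI : I^2 = -1) : I.re = 0 ∧ normSq I = 1 := by
  rw [sq, Quaternion.ext_iff] at hI
  simp only [Quaternion.re_mul, Quaternion.imI_mul, Quaternion.imJ_mul, Quaternion.imK_mul,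
    Quaternion.re_neg, Quaternion.imI_neg, Quaternion.imJ_neg, Quaternion.imK_neg,
    Quaternion.re_one, Quaternion.imI_one, Quaternion.imJ_one, Quaternion.imK_one] at hI
  obtain ⟨h1, h2, h3, h4⟩ := hI
  have hre : I.re = 0 := by
    nlinarith [sq_nonneg I.re, sq_nonneg I.imI, sq_nonneg I.imJ, sq_nonneg I.imK]
  exact ⟨hre, by rw [Quaternion.normSq_def']; nlinarith [hre]⟩

/-- The ring embedding ℂ → ℍ sending `i` to `I`. -/
noncomputable def cplxHom (I : ℍ[ℝ]) (hI : I ^ 2 = -1) : ℂ →+* ℍ[ℝ] where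
  toFun z := (z.re : ℍ[ℝ]) + z.im • I
  map_one' := by simp
  map_mul' z w := by
    have h : I * I = -1 := by rw [← sq]; exact hI
    have hc : ∀ r : ℝ, (r : ℍ[ℝ]) = r • (1 : ℍ[ℝ]) := fun r => by
      rw [← Quaternion.coe_one, Quaternion.smul_coe, mul_one]
    show (((z*w).re : ℝ) : ℍ[ℝ]) + (z*w).im • I
        = ((z.re : ℍ[ℝ]) + z.im • I) * ((w.re : ℍ[ℝ]) + w.im • I)
    simp only [add_mul, mul_add, smul_mul_assoc, mul_smul_comm, smul_smul, h, smul_neg, smul_add,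
      Quaternion.mul_coe_eq_smul, Quaternion.coe_mul_eq_smul,
      Complex.mul_re, Complex.mul_im, Quaternion.coe_sub, add_smul]
    simp only [hc, smul_smul, smul_neg, smul_add]
    module
  map_zero' := by simp
  map_add' z w := by
    show (((z+w).re : ℝ) : ℍ[ℝ]) + (z+w).im • I = _
    simp only [Complex.add_re, Complex.add_im, add_smul]
    push_cast
    abel

lemma cplxHom_apply (I : ℍ[ℝ]) (hI : I ^ 2 = -1) (z : ℂ) :
    cplxHom I hI z = (z.re : ℍ[ℝ]) + z.im • I := rfl

lemma cplxHom_norm (I : ℍ[ℝ]) (hI : I ^ 2 = -1) (z : ℂ) : ‖cplxHom I hI z‖ = ‖z‖ := by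
  obtain ⟨hre, hns⟩ := aux_re_normSq hI
  have h1 : ‖cplxHom I hI z‖ ^ 2 = ‖z‖ ^ 2 := by
    rw [sq, sq, ← Quaternion.normSq_eq_norm_mul_self, 
      show ‖z‖ * ‖z‖ = Complex.normSq z by
        rw [← Complex.sq_norm, sq], Complex.normSq_apply, cplxHom_apply]
    rw [Quaternion.normSq_def'] at hns ⊢
    simp only [Quaternion.re_add, Quaternion.imI_add, Quaternion.imJ_add, Quaternion.imK_add,
      Quaternion.re_coe, Quaternion.imI_coe, Quaternion.imJ_coe, Quaternion.imK_coe,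
      Quaternion.re_smul, Quaternion.imI_smul, Quaternion.imJ_smul, Quaternion.imK_smul,
      smul_eq_mul, hre, mul_zero, add_zero, zero_add]
    rw [hre] at hns; nlinarith [hns, sq_nonneg z.im]
  have h2 := congrArg Real.sqrt h1
  rwa [Real.sqrt_sq (norm_nonneg _), Real.sqrt_sq (norm_nonneg _)] at h2

lemma cplxHom_re (I : ℍ[ℝ]) (hI : I ^ 2 = -1) (z : ℂ) : (cplxHom I hI z).re = z.re := by
  obtain ⟨hre, -⟩ := aux_re_normSq hI
  simp [cplxHom_apply, Quaternion.re_smul, hre]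

lemma cplxHom_I (I : ℍ[ℝ]) (hI : I ^ 2 = -1) : cplxHom I hI Complex.I = I := by
  simp [cplxHom_apply]

lemma cplxHom_ofReal (I : ℍ[ℝ]) (hI : I ^ 2 = -1) (r : ℝ) :
    cplxHom I hI (r : ℂ) = (r : ℍ[ℝ]) := by
  simp [cplxHom_apply]

lemma key_slice (Ω : Set ℍ[ℝ]) (hopen : IsOpen Ω)
    (hreal : (Ω ∩ Set.range (fun x : ℝ => (x : ℍ[ℝ]))).Nonempty)
    (hslice : ∀ I : ℍ[ℝ], I ^ 2 = -1 → IsConnected (Ω ∩ {q | ∃ x y : ℝ, q = (x : ℍ[ℝ]) + y • I}))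
    (f g : ℍ[ℝ] → ℍ[ℝ])
    (hf : ∀ I : ℍ[ℝ], I ^ 2 = -1 → ∀ x y : ℝ, (x : ℍ[ℝ]) + y • I ∈ Ω →
      DifferentiableAt ℝ (fun p : ℝ × ℝ => f ((p.1 : ℍ[ℝ]) + p.2 • I)) (x, y) ∧
      fderiv ℝ (fun p : ℝ × ℝ => f ((p.1 : ℍ[ℝ]) + p.2 • I)) (x, y) (0, 1) =
        I * fderiv ℝ (fun p : ℝ × ℝ => f ((p.1 : ℍ[ℝ]) + p.2 • I)) (x, y) (1, 0))
    (hg : ∀ I : ℍ[ℝ], I ^ 2 = -1 → ∀ x y : ℝ, (x : ℍ[ℝ]) + y • I ∈ Ω →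
      DifferentiableAt ℝ (fun p : ℝ × ℝ => g ((p.1 : ℍ[ℝ]) + p.2 • I)) (x, y) ∧
      fderiv ℝ (fun p : ℝ × ℝ => g ((p.1 : ℍ[ℝ]) + p.2 • I)) (x, y) (0, 1) =
        I * fderiv ℝ (fun p : ℝ × ℝ => g ((p.1 : ℍ[ℝ]) + p.2 • I)) (x, y) (1, 0))
    (heq : ∀ x : ℝ, (x : ℍ[ℝ]) ∈ Ω → f (x : ℍ[ℝ]) = g (x : ℍ[ℝ]))
    (I : ℍ[ℝ]) (hI : I ^ 2 = -1) (x y : ℝ) (hmem : (x : ℍ[ℝ]) + y • I ∈ Ω) :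
    f ((x : ℍ[ℝ]) + y • I) = g ((x : ℍ[ℝ]) + y • I) := by
  obtain ⟨q₀, hq₀Ω, x₀, hx₀⟩ := hreal
  letI instM : Module ℂ ℍ[ℝ] := Module.compHom _ (cplxHom I hI)
  have hsmul : ∀ (z : ℂ) (q : ℍ[ℝ]), z • q = cplxHom I hI z * q := fun _ _ => rfl
  letI instNS : NormedSpace ℂ ℍ[ℝ] :=
    { norm_smul_le := fun z q => by
        rw [hsmul, norm_mul, cplxHom_norm] }
  letI instT : IsScalarTower ℝ ℂ ℍ[ℝ] :=
    ⟨fun r z q => by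
      rw [hsmul, hsmul]
      have : (r • z : ℂ) = (r : ℂ) * z := by rw [Complex.real_smul]
      rw [this, map_mul, cplxHom_ofReal, mul_assoc, Quaternion.coe_mul_eq_smul]⟩
  set φ : ℂ → ℍ[ℝ] := fun z => cplxHom I hI z with hφ
  have hφcont : Continuous φ := by
    have : Isometry φ := AddMonoidHomClass.isometry_of_norm (cplxHom I hI)
      (fun z => cplxHom_norm I hI z)
    exact this.continuous
  set U : Set ℂ := φ ⁻¹' Ω with hU
  have hUopen : IsOpen U := hopen.preimage hφcont
  -- differentiability of pullbacks
  have main : ∀ h : ℍ[ℝ] → ℍ[ℝ],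
      (∀ x y : ℝ, (x : ℍ[ℝ]) + y • I ∈ Ω →
        DifferentiableAt ℝ (fun p : ℝ × ℝ => h ((p.1 : ℍ[ℝ]) + p.2 • I)) (x, y) ∧
        fderiv ℝ (fun p : ℝ × ℝ => h ((p.1 : ℍ[ℝ]) + p.2 • I)) (x, y) (0, 1) =
          I * fderiv ℝ (fun p : ℝ × ℝ => h ((p.1 : ℍ[ℝ]) + p.2 • I)) (x, y) (1, 0)) →
      DifferentiableOn ℂ (fun z => h (φ z)) U := by
    intro h hreg z hzU
    have hzΩ : φ z ∈ Ω := hzU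
    have hmem' : (z.re : ℍ[ℝ]) + z.im • I ∈ Ω := by rwa [← cplxHom_apply I hI]
    obtain ⟨hdK, hCR⟩ := hreg z.re z.im hmem'
    set K := fun p : ℝ × ℝ => h ((p.1 : ℍ[ℝ]) + p.2 • I) with hK
    set D := fderiv ℝ K (z.re, z.im) with hD
    have hKD : HasFDerivAt K D (z.re, z.im) := hdK.hasFDerivAt
    have he : HasFDerivAt (fun w : ℂ => (w.re, w.im))
        (Complex.equivRealProdCLM : ℂ →L[ℝ] ℝ × ℝ) z :=
      Complex.equivRealProdCLM.hasFDerivAt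
    have hF : HasFDerivAt (fun w : ℂ => h (φ w))
        (D.comp (Complex.equivRealProdCLM : ℂ →L[ℝ] ℝ × ℝ)) z := by
      have := hKD.comp z he
      convert this using 1
      all_goals rfl
    set L : ℂ →L[ℂ] ℍ[ℝ] := ContinuousLinearMap.toSpanSingleton ℂ (D (1, 0)) with hL
    have hrestrict : L.restrictScalars ℝ = D.comp (Complex.equivRealProdCLM : ℂ →L[ℝ] ℝ × ℝ) := by
      apply ContinuousLinearMap.ext
      intro w
      have h1 : (w.re, w.im) = w.re • ((1 : ℝ), (0 : ℝ)) + w.im • ((0 : ℝ), (1 : ℝ)) := by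
        simp [Prod.ext_iff]
      have h2 : (L.restrictScalars ℝ) w = w • D (1, 0) := rfl
      rw [h2, hsmul, cplxHom_apply]
      show _ = D (w.re, w.im)
      rw [h1, map_add, map_smul, map_smul, hCR, add_mul, Quaternion.coe_mul_eq_smul,
        smul_mul_assoc]
    have : HasFDerivAt (fun w : ℂ => h (φ w)) L z :=
      hasFDerivAt_of_restrictScalars (𝕜 := ℝ) hF hrestrict
    exact this.differentiableAt.differentiableWithinAt
  have hFan : AnalyticOnNhd ℂ (fun z => f (φ z)) U :=
    (main f (hf I hI)).analyticOnNhd hUopen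
  have hGan : AnalyticOnNhd ℂ (fun z => g (φ z)) U :=
    (main g (hg I hI)).analyticOnNhd hUopen
  -- connectedness of U
  set ρ : ℍ[ℝ] → ℂ := fun q => (q.re : ℂ) + (-(q * I).re : ℝ) • Complex.I with hρ
  have hρcont : Continuous ρ := by
    apply (Complex.continuous_ofReal.comp Quaternion.continuous_re).add
    apply Continuous.smul (f := fun q : ℍ[ℝ] => -(q * I).re) ?_ continuous_const
    exact (Quaternion.continuous_re.comp (continuous_id.mul continuous_const)).neg
  have hρφ : ∀ z : ℂ, ρ (φ z) = z := by
    intro z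
    have h1 : (φ z).re = z.re := cplxHom_re I hI z
    have h2 : (φ z * I).re = -z.im := by
      have : φ z * I = φ (z * Complex.I) := by
        show _ = cplxHom I hI (z * Complex.I)
        rw [map_mul, cplxHom_I]
      rw [this, cplxHom_re, Complex.mul_I_re]
    apply Complex.ext
    · simpa [hρ] using h1
    · show (((φ z).re : ℂ) + (-(φ z * I).re : ℝ) • Complex.I).im = z.im
      rw [Complex.add_im, Complex.ofReal_im, Complex.real_smul, Complex.mul_im]
      simp only [Complex.ofReal_re, Complex.ofReal_im, Complex.I_im, Complex.I_re,
        mul_one, mul_zero, sub_zero, zero_add, h2]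
      ring
  have hUeq : U = ρ '' (Ω ∩ {q | ∃ a b : ℝ, q = (a : ℍ[ℝ]) + b • I}) := by
    ext z
    constructor
    · intro hz
      exact ⟨φ z, ⟨hz, ⟨z.re, z.im, rfl⟩⟩, hρφ z⟩
    · rintro ⟨q, ⟨hqΩ, ⟨a, b, rfl⟩⟩, rfl⟩
      have hq : (a : ℍ[ℝ]) + b • I = φ (Complex.mk a b) := rfl
      show φ (ρ ((a : ℍ[ℝ]) + b • I)) ∈ Ω
      rw [hq, hρφ, ← hq]
      exact hqΩ
  have hUconn : IsPreconnected U := by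
    rw [hUeq]
    exact (((hslice I hI).image ρ hρcont.continuousOn).isPreconnected)
  -- base point
  have hz₀U : (x₀ : ℂ) ∈ U := by
    show cplxHom I hI (x₀ : ℂ) ∈ Ω
    rw [cplxHom_ofReal]
    rw [show ((x₀ : ℝ) : ℍ[ℝ]) = q₀ from hx₀]
    exact hq₀Ω
  -- frequently equal near the real point x₀
  have hfreq : ∃ᶠ z in nhdsWithin (x₀ : ℂ) {(x₀ : ℂ)}ᶜ, f (φ z) = g (φ z) := by
    set u : ℕ → ℂ := fun n => ((x₀ + 1/(n+1) : ℝ) : ℂ) with hu'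
    have hu1 : Filter.Tendsto u Filter.atTop (nhds (x₀ : ℂ)) := by
      have h0 : Filter.Tendsto (fun n : ℕ => x₀ + 1/((n:ℝ)+1)) Filter.atTop (nhds x₀) := by
        simpa using (tendsto_const_nhds (x := x₀)).add tendsto_one_div_add_atTop_nhds_zero_nat
      exact (Complex.continuous_ofReal.tendsto _).comp h0
    have hu2 : ∀ n, u n ≠ (x₀ : ℂ) := by
      intro n
      simp only [hu', ne_eq, Complex.ofReal_inj]
      have : (0:ℝ) < 1/((n:ℝ)+1) := by positivity
      intro hcon
      nlinarith [hcon]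
    have hu : Filter.Tendsto u Filter.atTop (nhdsWithin (x₀ : ℂ) {(x₀ : ℂ)}ᶜ) :=
      tendsto_nhdsWithin_of_tendsto_nhds_of_eventually_within u hu1
        (Filter.Eventually.of_forall fun n => hu2 n)
    have hmemU : ∀ᶠ n in Filter.atTop, u n ∈ U := hu1.eventually (hUopen.mem_nhds hz₀U)
    apply hu.frequently
    apply Filter.Eventually.frequently
    filter_upwards [hmemU] with n hn
    have hφu : φ (u n) = ((x₀ + 1/(n+1) : ℝ) : ℍ[ℝ]) := cplxHom_ofReal I hI _
    have hnΩ : ((x₀ + 1/(n+1) : ℝ) : ℍ[ℝ]) ∈ Ω := by rw [← hφu]; exact hn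
    show f (φ (u n)) = g (φ (u n))
    rw [hφu]
    exact heq _ hnΩ
  have heqon := hFan.eqOn_of_preconnected_of_frequently_eq hGan hUconn hz₀U hfreq
  have hzmem : (Complex.mk x y) ∈ U := by
    show cplxHom I hI (Complex.mk x y) ∈ Ω
    exact hmem
  have := heqon hzmem
  exact this

/-- Identity Principle: regular functions on a domain which intersects the real axis
and has connected intersection with every complex line coincide as soon as they
coincide on the real points of the domain. -/
theorem identity_principle
    (Ω : Set ℍ[ℝ]) (hopen : IsOpen Ω) (hconn : IsConnected Ω)
    (hreal : (Ω ∩ Set.range (fun x : ℝ => (x : ℍ[ℝ]))).Nonempty)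
    (hslice : ∀ I : ℍ[ℝ], I ^ 2 = -1 → IsConnected (Ω ∩ complexLine I))
    (f g : ℍ[ℝ] → ℍ[ℝ])
    (hf : SliceRegularOn Ω f) (hg : SliceRegularOn Ω g)
    (heq : ∀ x : ℝ, (x : ℍ[ℝ]) ∈ Ω → f (x : ℍ[ℝ]) = g (x : ℍ[ℝ])) :
    Set.EqOn f g Ω := by
  intro q hq
  by_cases him : q.im = 0
  · have hq' : q = (q.re : ℍ[ℝ]) := by
      conv_lhs => rw [← Quaternion.re_add_im q]
      rw [him, add_zero]
    rw [hq'] at hq ⊢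
    exact heq q.re hq
  · set y := ‖q.im‖ with hy
    have hy0 : y ≠ 0 := norm_ne_zero_iff.mpr him
    set I := y⁻¹ • q.im with hIdef
    have hI : I ^ 2 = -1 := by
      rw [hIdef, smul_pow, Quaternion.im_sq, Quaternion.normSq_eq_norm_mul_self, ← hy,
        smul_neg, Quaternion.smul_coe]
      have h1 : y⁻¹ ^ 2 * (y * y) = 1 := by field_simp
      rw [h1, Quaternion.coe_one]
    have hq2 : q = (q.re : ℍ[ℝ]) + y • I := by
      rw [hIdef, smul_smul, mul_inv_cancel₀ hy0, one_smul, Quaternion.re_add_im]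
    rw [hq2] at hq ⊢
    exact key_slice Ω hopen hreal hslice f g hf hg heq I hI q.re y hq
end

section
/- (Maximum Modulus Principle) Let Ω = B(0,R) ∖ ℰ where ℰ is a closed subset of B(0,R) consisting of isolated points and isolated 2-spheres of the form x + y𝕊, and let f : Ω → ℍ be regular. If |f| has a local maximum point p ∈ Ω, then f is constant on Ω. -/
open Quaternion

/-- The 2-sphere `x + y𝕊`. -/
def sphereSet (x y : ℝ) : Set ℍ[ℝ] :=
  {q | ∃ K : ℍ[ℝ], K ^ 2 = -1 ∧ q = (x : ℍ[ℝ]) + y • K}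

open Metric Set

noncomputable def mmPhi (I : ℍ[ℝ]) (z : ℂ) : ℍ[ℝ] := ((z.re : ℝ) : ℍ[ℝ]) + z.im • I

lemma mm_re_eq_zero {I : ℍ[ℝ]} (hI : I * I = -1) : I.re = 0 := by
  by_contra h
  have h1 : (I * I).imI = 0 := by rw [hI]; simp
  have hre : (I * I).re = -1 := by rw [hI]; simp
  have h2 : (I * I).imJ = 0 := by rw [hI]; simp
  have h3 : (I * I).imK = 0 := by rw [hI]; simp
  simp only [Quaternion.imI_mul, Quaternion.imJ_mul, Quaternion.imK_mul, Quaternion.re_mul] at *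
  have e1 : I.re * I.imI = 0 := by linear_combination h1 / 2
  have e2 : I.re * I.imJ = 0 := by linear_combination h2 / 2
  have e3 : I.re * I.imK = 0 := by linear_combination h3 / 2
  have hiI : I.imI = 0 := by rcases mul_eq_zero.1 e1 with h' | h' <;> tauto
  have hiJ : I.imJ = 0 := by rcases mul_eq_zero.1 e2 with h' | h' <;> tauto
  have hiK : I.imK = 0 := by rcases mul_eq_zero.1 e3 with h' | h' <;> tauto
  rw [hiI, hiJ, hiK] at hre
  nlinarith [sq_nonneg I.re]

lemma mm_normSq_eq_one {I : ℍ[ℝ]} (hI : I * I = -1) : normSq I = 1 := by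
  have h := congrArg normSq hI
  rw [map_mul] at h
  have h1 : normSq (-1 : ℍ[ℝ]) = 1 := by simp
  have := normSq_nonneg (a := I)
  nlinarith [h.trans h1]

lemma mm_norm_eq_one {I : ℍ[ℝ]} (hI : I * I = -1) : ‖I‖ = 1 := by
  have h := mm_normSq_eq_one hI
  rw [Quaternion.normSq_eq_norm_mul_self] at h
  nlinarith [norm_nonneg I]

lemma mm_star {I : ℍ[ℝ]} (hI : I * I = -1) : star I = -I :=
  Quaternion.star_eq_neg.2 (mm_re_eq_zero hI)

lemma mm_normSq_comb {I : ℍ[ℝ]} (hI : I * I = -1) (a b : ℝ) :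
    normSq ((a : ℍ[ℝ]) + b • I) = a ^ 2 + b ^ 2 := by
  have h0 := mm_re_eq_zero hI
  have h1 := mm_normSq_eq_one hI
  rw [normSq_def'] at h1 ⊢
  simp only [Quaternion.re_add, Quaternion.imI_add, Quaternion.imJ_add, Quaternion.imK_add,
    Quaternion.re_coe, Quaternion.imI_coe, Quaternion.imJ_coe, Quaternion.imK_coe,
    Quaternion.re_smul, Quaternion.imI_smul, Quaternion.imJ_smul, Quaternion.imK_smul,
    smul_eq_mul, h0, mul_zero, add_zero, zero_add]
  linear_combination (b ^ 2) * h1 - (b ^ 2 * I.re) * h0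

lemma mm_norm_comb {I : ℍ[ℝ]} (hI : I * I = -1) (a b : ℝ) :
    ‖(a : ℍ[ℝ]) + b • I‖ = Real.sqrt (a ^ 2 + b ^ 2) := by
  have h := mm_normSq_comb hI a b
  rw [Quaternion.normSq_eq_norm_mul_self] at h
  rw [← h, Real.sqrt_mul_self (norm_nonneg _)]

lemma mm_norm_phi {I : ℍ[ℝ]} (hI : I * I = -1) (z : ℂ) : ‖mmPhi I z‖ = ‖z‖ := by
  rw [mmPhi, mm_norm_comb hI, Complex.norm_def, Complex.normSq_apply] ; ring_nf

lemma mm_phi_sub {I : ℍ[ℝ]} (z w : ℂ) : mmPhi I z - mmPhi I w = mmPhi I (z - w) := by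
  simp only [mmPhi, Complex.sub_re, Complex.sub_im, sub_smul]
  push_cast
  abel

lemma mm_dist_phi {I : ℍ[ℝ]} (hI : I * I = -1) (z w : ℂ) :
    ‖mmPhi I z - mmPhi I w‖ = ‖z - w‖ := by
  rw [mm_phi_sub, mm_norm_phi hI]

lemma mm_phi_inj {I : ℍ[ℝ]} (hI : I * I = -1) : Function.Injective (mmPhi I) := by
  intro z w h
  have := mm_dist_phi hI z w
  rw [h, sub_self, norm_zero] at this
  have := norm_eq_zero.1 this.symm
  exact sub_eq_zero.1 this

lemma mm_phi_real {I : ℍ[ℝ]} (t : ℝ) : mmPhi I (t : ℂ) = (t : ℍ[ℝ]) := by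
  simp [mmPhi]

lemma mm_exists_slice (q : ℍ[ℝ]) : ∃ I : ℍ[ℝ], ∃ z : ℂ, I * I = -1 ∧ mmPhi I z = q := by
  by_cases h : q - (q.re : ℍ[ℝ]) = 0
  · refine ⟨(Quaternion.equivProd ℝ).symm (0,1,0,0), (q.re : ℂ), ?_, ?_⟩
    · ext <;> simp [Quaternion.re_mul, Quaternion.imI_mul, Quaternion.imJ_mul, Quaternion.imK_mul]
    · rw [mm_phi_real]
      have := sub_eq_zero.1 h
      exact this.symm
  · set v := q - (q.re : ℍ[ℝ]) with hv
    have hvre : v.re = 0 := by simp [hv]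
    have hvnorm : (0:ℝ) < ‖v‖ := norm_pos_iff.2 h
    refine ⟨‖v‖⁻¹ • v, Complex.mk q.re ‖v‖, ?_, ?_⟩
    · have hvv : v * v = -((normSq v : ℝ) : ℍ[ℝ]) := by
        have hstar : star v = -v := Quaternion.star_eq_neg.2 hvre
        calc v * v = -(v * star v) := by rw [hstar, mul_neg, neg_neg]
        _ = -((normSq v : ℝ) : ℍ[ℝ]) := by rw [Quaternion.self_mul_star]
      rw [smul_mul_smul_comm, hvv, Quaternion.normSq_eq_norm_mul_self]
      rw [smul_neg]
      have : (‖v‖⁻¹ * ‖v‖⁻¹) • ((‖v‖ * ‖v‖ : ℝ) : ℍ[ℝ]) = ((1:ℝ) : ℍ[ℝ]) := by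
        rw [Quaternion.smul_coe]
        congr 1
        field_simp
      rw [this]
      norm_num
    · show ((q.re : ℝ) : ℍ[ℝ]) + ‖v‖ • (‖v‖⁻¹ • v) = q
      rw [smul_smul, mul_inv_cancel₀ (ne_of_gt hvnorm), one_smul]
      rw [hv]
      abel


noncomputable def mmLine (a v : ℂ) : Set ℂ := (fun z => z - a) ⁻¹' (Submodule.span ℝ {v} : Set ℂ)

lemma mm_isClosed_line (a v : ℂ) : IsClosed (mmLine a v) :=
  ((Submodule.span ℝ {v}).closed_of_finiteDimensional).preimage (continuous_sub_right a)

lemma mm_not_mem_span (v : ℂ) : ∃ w : ℂ, w ∉ (Submodule.span ℝ {v} : Set ℂ) := by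
  by_cases hv : v = 0
  · refine ⟨1, ?_⟩
    simp [hv]
  · refine ⟨Complex.I * v, ?_⟩
    intro hmem
    rw [SetLike.mem_coe, Submodule.mem_span_singleton] at hmem
    obtain ⟨t, ht⟩ := hmem
    rw [Complex.real_smul] at ht
    have : (t : ℂ) = Complex.I := mul_right_cancel₀ hv ht
    have him := congrArg Complex.im this
    simp at him

lemma mm_dense_compl_line (a v : ℂ) : Dense (mmLine a v)ᶜ := by
  rw [← interior_eq_empty_iff_dense_compl]
  by_contra h
  obtain ⟨z, hz⟩ := Set.nonempty_iff_ne_empty.2 h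
  obtain ⟨w, hw⟩ := mm_not_mem_span v
  have hnhds : mmLine a v ∈ nhds z := mem_interior_iff_mem_nhds.1 hz
  have hzmem : z ∈ mmLine a v := mem_of_mem_nhds hnhds
  have htend : Filter.Tendsto (fun δ : ℝ => z + δ • w) (nhdsWithin 0 (Set.Ioi 0)) (nhds z) := by
    have : Filter.Tendsto (fun δ : ℝ => z + δ • w) (nhds 0) (nhds z) := by
      have hc : Continuous (fun δ : ℝ => z + δ • w) := by fun_prop
      have := hc.tendsto (0 : ℝ)
      simpa using this
    exact this.mono_left nhdsWithin_le_nhds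
  have hev := htend.eventually_mem hnhds
  obtain ⟨δ, hδmem, hδpos⟩ := (hev.and self_mem_nhdsWithin).exists
  have hδne : δ ≠ 0 := ne_of_gt hδpos
  have h1 : z + δ • w - a ∈ Submodule.span ℝ {v} := hδmem
  have h2 : z - a ∈ Submodule.span ℝ {v} := hzmem
  have h3 : δ • w ∈ Submodule.span ℝ {v} := by
    have := Submodule.sub_mem _ h1 h2
    simpa using this
  have : w ∈ Submodule.span ℝ {v} := by
    have := Submodule.smul_mem _ δ⁻¹ h3
    rwa [smul_smul, inv_mul_cancel₀ hδne, one_smul] at this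
  exact hw this

lemma mm_mem_line_of_seg {x c m : ℂ} (hxc : x ≠ c) (hc : c ∈ segment ℝ x m) : m ∈ mmLine x (c - x) := by
  obtain ⟨s, t, hs, ht, hst, heq⟩ := hc
  have ht0 : t ≠ 0 := by
    rintro rfl
    have hs1 : s = 1 := by linarith
    rw [hs1] at heq
    have : c = x := by simpa using heq.symm
    exact hxc this.symm
  show m - x ∈ (Submodule.span ℝ {c - x} : Set ℂ)
  rw [SetLike.mem_coe, Submodule.mem_span_singleton]
  refine ⟨t⁻¹, ?_⟩
  have hcx : c - x = t • (m - x) := by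
    have hs1 : s = 1 - t := by linarith
    rw [← heq, hs1]
    module
  rw [hcx, smul_smul, inv_mul_cancel₀ ht0, one_smul]

lemma mm_preconnected_ball_diff_countable {c : ℂ} {R : ℝ} {s : Set ℂ} (hs : s.Countable) :
    IsPreconnected (Metric.ball c R \ s) := by
  rcases Set.eq_empty_or_nonempty (Metric.ball c R \ s) with h | _
  · rw [h]; exact isPreconnected_empty
  apply isPreconnected_of_forall_pair
  intro x hx y hy
  haveI : Countable ↥s := hs.to_subtype
  -- find a midpoint m avoiding all lines through x (resp. y) and points of s
  set G : ↥s → Set ℂ := fun e => (mmLine x ((e : ℂ) - x))ᶜ ∩ (mmLine y ((e : ℂ) - y))ᶜ with hG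
  have hGo : ∀ e, IsOpen (G e) := fun e =>
    ((mm_isClosed_line _ _).isOpen_compl).inter ((mm_isClosed_line _ _).isOpen_compl)
  have hGd : ∀ e, Dense (G e) := fun e =>
    (mm_dense_compl_line x _).inter_of_isOpen_left (mm_dense_compl_line y _)
      ((mm_isClosed_line _ _).isOpen_compl)
  have hdense : Dense (⋂ e, G e) := dense_iInter_of_isOpen hGo hGd
  obtain ⟨m, hm_ball, hm⟩ := hdense.inter_open_nonempty (Metric.ball c R) isOpen_ball
    ⟨x, hx.1⟩
  have hseg : ∀ {u : ℂ}, u ∈ Metric.ball c R \ s →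
      (∀ e : ↥s, m ∉ mmLine u ((e : ℂ) - u)) → segment ℝ u m ⊆ Metric.ball c R \ s := by
    intro u hu hlines z hz
    constructor
    · exact (convex_ball c R).segment_subset hu.1 hm_ball hz
    · intro hzs
      have hne : u ≠ z := by rintro rfl; exact hu.2 hzs
      exact hlines ⟨z, hzs⟩ (mm_mem_line_of_seg hne hz)
  have hmx : ∀ e : ↥s, m ∉ mmLine x ((e : ℂ) - x) := fun e =>
    fun hmem => ((Set.mem_iInter.1 hm e).1) hmem
  have hmy : ∀ e : ↥s, m ∉ mmLine y ((e : ℂ) - y) := fun e =>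
    fun hmem => ((Set.mem_iInter.1 hm e).2) hmem
  refine ⟨segment ℝ x m ∪ segment ℝ y m, ?_, ?_, ?_, ?_⟩
  · exact Set.union_subset (hseg hx hmx) (hseg hy hmy)
  · exact Or.inl (left_mem_segment ℝ x m)
  · exact Or.inr (left_mem_segment ℝ y m)
  · exact IsPreconnected.union m (right_mem_segment ℝ x m) (right_mem_segment ℝ y m)
      (convex_segment _ _).isPreconnected (convex_segment _ _).isPreconnected

lemma mm_countable_of_loc_finite {s : Set ℂ} (h : ∀ z ∈ s, ∃ V, V ∈ nhds z ∧ (V ∩ s).Finite) :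
    s.Countable := by
  choose! V hV hVfin using h
  have hlin : IsLindelof s := HereditarilyLindelof_LindelofSets s
  obtain ⟨t, htc, ht, hcover⟩ := hlin.elim_nhds_subcover V (fun z hz => hV z hz)
  have : s ⊆ ⋃ z ∈ t, (V z ∩ s) := by
    intro u hu
    obtain ⟨_, ⟨z, rfl⟩, h2⟩ := hcover hu
    simp only [Set.mem_iUnion] at h2 ⊢
    obtain ⟨hz, huV⟩ := h2
    exact ⟨z, hz, huV, hu⟩
  refine Set.Countable.mono this ?_
  exact Set.Countable.biUnion htc (fun z hz => (hVfin z (ht z hz)).countable)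

lemma mm_phi_continuous (I : ℍ[ℝ]) : Continuous (mmPhi I) := by
  exact (Quaternion.continuous_coe.comp Complex.continuous_re).add
    (Complex.continuous_im.smul continuous_const)

noncomputable def mmNS (I : ℍ[ℝ]) (hI : I * I = -1) : NormedSpace ℂ ℍ[ℝ] :=
  letI : Module ℂ ℍ[ℝ] := Module.compHom ℍ[ℝ] (Complex.liftAux I hI).toRingHom
  { norm_smul_le := by
      intro c q
      show ‖(Complex.liftAux I hI) c * q‖ ≤ ‖c‖ * ‖q‖
      rw [norm_mul]
      apply mul_le_mul_of_nonneg_right _ (norm_nonneg q)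
      rw [Complex.liftAux_apply]
      have : (algebraMap ℝ ℍ[ℝ]) c.re = ((c.re : ℝ) : ℍ[ℝ]) := rfl
      rw [this, mm_norm_comb hI]
      rw [Complex.norm_def, Complex.normSq_apply]
      apply le_of_eq
      ring_nf }

lemma mmTower (I : ℍ[ℝ]) (hI : I * I = -1) :
    letI := mmNS I hI
    IsScalarTower ℝ ℂ ℍ[ℝ] := by
  letI := mmNS I hI
  refine ⟨fun r c q => ?_⟩
  show (Complex.liftAux I hI) (r • c) * q = r • ((Complex.liftAux I hI) c * q)
  rw [map_smul, smul_mul_assoc]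

theorem mm_diffOn (Ω : Set ℍ[ℝ]) (f : ℍ[ℝ] → ℍ[ℝ]) (hf : SliceRegularOn Ω f)
    (I : ℍ[ℝ]) (hI : I * I = -1) :
    letI := mmNS I hI
    DifferentiableOn ℂ (fun z => f (mmPhi I z)) (mmPhi I ⁻¹' Ω) := by
  letI := mmNS I hI
  letI : IsScalarTower ℝ ℂ ℍ[ℝ] := mmTower I hI
  intro z hz
  obtain ⟨hd, hCR⟩ := hf I (by rw [sq]; exact hI) z.re z.im hz
  set g : ℝ × ℝ → ℍ[ℝ] := fun p => f ((p.1 : ℍ[ℝ]) + p.2 • I) with hg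
  set L := fderiv ℝ g (z.re, z.im) with hL
  have hgL : HasFDerivAt g L (z.re, z.im) := hd.hasFDerivAt
  set M : ℂ →L[ℝ] ℍ[ℝ] := L.comp (Complex.equivRealProdCLM : ℂ →L[ℝ] ℝ × ℝ) with hM
  have hMd : HasFDerivAt (fun w => f (mmPhi I w)) M z := by
    have h1 : HasFDerivAt (Complex.equivRealProdCLM : ℂ → ℝ × ℝ)
        (Complex.equivRealProdCLM : ℂ →L[ℝ] ℝ × ℝ) z :=
      Complex.equivRealProdCLM.toContinuousLinearMap.hasFDerivAt
    have h2 : HasFDerivAt g L (Complex.equivRealProdCLM z) := hgL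
    have := h2.comp z h1
    exact this
  have hM1 : M 1 = L (1, 0) := by
    show L (Complex.equivRealProdCLM 1) = L (1, 0)
    norm_num
  have hMI : M Complex.I = L (0, 1) := by
    show L (Complex.equivRealProdCLM Complex.I) = L (0, 1)
    norm_num
  have hBA : M Complex.I = I * M 1 := by rw [hM1, hMI]; exact hCR
  have key : ∀ u : ℂ, M (Complex.I * u) = I * M u := by
    intro u
    have hu : Complex.I * u = u.re • Complex.I + (-u.im) • (1 : ℂ) := by
      apply Complex.ext <;> simp
    have hu2 : u = u.re • (1 : ℂ) + u.im • Complex.I := by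
      apply Complex.ext <;> simp
    rw [hu, M.map_add, M.map_smul, M.map_smul]
    conv_rhs => rw [hu2]
    rw [M.map_add, M.map_smul, M.map_smul, mul_add, mul_smul_comm, mul_smul_comm, hBA,
      ← mul_assoc, hI, neg_one_mul]
    module
  set Mc : ℂ →ₗ[ℂ] ℍ[ℝ] :=
    { toFun := M
      map_add' := M.map_add
      map_smul' := by
        intro c u
        have hcu : c * u = c.re • u + c.im • (Complex.I * u) := by
          apply Complex.ext <;> simp <;> ring
        show M (c * u) = (Complex.liftAux I hI) c * M u
        rw [hcu, M.map_add, M.map_smul, M.map_smul, key, Complex.liftAux_apply]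
        have : (algebraMap ℝ ℍ[ℝ]) c.re = ((c.re : ℝ) : ℍ[ℝ]) := rfl
        rw [this, add_mul, coe_mul_eq_smul, smul_mul_assoc] } with hMc
  have hMccont : HasFDerivAt (fun w => f (mmPhi I w)) (LinearMap.toContinuousLinearMap Mc) z := by
    apply hasFDerivAt_of_restrictScalars ℝ hMd
    apply ContinuousLinearMap.ext
    intro u
    rfl
  exact hMccont.differentiableAt.differentiableWithinAt

theorem mm_eqOn (Ω : Set ℍ[ℝ]) (hΩ : IsOpen Ω) (f : ℍ[ℝ] → ℍ[ℝ]) (hf : SliceRegularOn Ω f)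
    (I : ℍ[ℝ]) (hI : I * I = -1) (hconn : IsPreconnected (mmPhi I ⁻¹' Ω)) (w : ℍ[ℝ])
    (z₀ : ℂ) (hz₀ : mmPhi I z₀ ∈ Ω)
    (hfreq : ∃ᶠ z in nhdsWithin z₀ {z₀}ᶜ, f (mmPhi I z) = w) :
    ∀ z : ℂ, mmPhi I z ∈ Ω → f (mmPhi I z) = w := by
  letI := mmNS I hI
  letI : IsScalarTower ℝ ℂ ℍ[ℝ] := mmTower I hI
  have hUopen : IsOpen (mmPhi I ⁻¹' Ω) := hΩ.preimage (mm_phi_continuous I)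
  have hdiff := mm_diffOn Ω f hf I hI
  have han : AnalyticOnNhd ℂ (fun z => f (mmPhi I z)) (mmPhi I ⁻¹' Ω) :=
    hdiff.analyticOnNhd hUopen
  have hconst : AnalyticOnNhd ℂ (fun _ : ℂ => w) (mmPhi I ⁻¹' Ω) := analyticOnNhd_const
  exact fun z hz => han.eqOn_of_preconnected_of_frequently_eq hconst hconn hz₀ hfreq hz

theorem mm_max (Ω : Set ℍ[ℝ]) (f : ℍ[ℝ] → ℍ[ℝ]) (hf : SliceRegularOn Ω f)
    (I : ℍ[ℝ]) (hI : I * I = -1) (z₀ : ℂ) (ε : ℝ)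
    (hball : Metric.ball (mmPhi I z₀) ε ⊆ Ω)
    (hmax : ∀ q ∈ Metric.ball (mmPhi I z₀) ε, ‖f q‖ ≤ ‖f (mmPhi I z₀)‖) :
    ∀ z ∈ Metric.ball z₀ ε, f (mmPhi I z) = f (mmPhi I z₀) := by
  letI := mmNS I hI
  letI : IsScalarTower ℝ ℂ ℍ[ℝ] := mmTower I hI
  intro z hz
  have hε : 0 < ε := lt_of_le_of_lt dist_nonneg (mem_ball.1 hz)
  have hphi_ball : ∀ u : ℂ, u ∈ Metric.ball z₀ ε → mmPhi I u ∈ Metric.ball (mmPhi I z₀) ε := by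
    intro u hu
    rw [mem_ball, dist_eq_norm] at hu ⊢
    rw [mm_dist_phi hI]
    exact hu
  have hsub : Metric.ball z₀ ε ⊆ mmPhi I ⁻¹' Ω := fun u hu => hball (hphi_ball u hu)
  have hdiff : DifferentiableOn ℂ (fun u => f (mmPhi I u)) (Metric.ball z₀ ε) :=
    (mm_diffOn Ω f hf I hI).mono hsub
  have hmaxOn : IsMaxOn (norm ∘ fun u => f (mmPhi I u)) (Metric.ball z₀ ε) z₀ := by
    intro u hu
    exact hmax _ (hphi_ball u hu)
  exact Complex.eqOn_of_isPreconnected_of_isMaxOn_norm (convex_ball z₀ ε).isPreconnected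
    isOpen_ball hdiff (mem_ball_self hε) hmaxOn hz

/-- Maximum Modulus Principle on `B(0,R)` minus a closed set `ℰ` consisting of
isolated points and isolated 2-spheres: if `|f|` has a local maximum point in
`Ω = B(0,R) ∖ ℰ`, then `f` is constant on `Ω`. -/
theorem maximum_modulus_principle
    (R : ℝ) (E : Set ℍ[ℝ]) (hE : E ⊆ Metric.ball (0 : ℍ[ℝ]) R)
    (hEiso : ∀ e ∈ E, ∃ S : Set ℍ[ℝ], e ∈ S ∧ S ⊆ E ∧
      ((∃ p, S = {p}) ∨ (∃ x y : ℝ, y ≠ 0 ∧ S = sphereSet x y)) ∧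
      ∃ U : Set ℍ[ℝ], IsOpen U ∧ S ⊆ U ∧ U ∩ E = S)
    (hopen : IsOpen (Metric.ball (0 : ℍ[ℝ]) R \ E))
    (f : ℍ[ℝ] → ℍ[ℝ])
    (hf : SliceRegularOn (Metric.ball (0 : ℍ[ℝ]) R \ E) f)
    (p : ℍ[ℝ]) (hp : p ∈ Metric.ball (0 : ℍ[ℝ]) R \ E)
    (hmax : IsLocalMaxOn (fun q => ‖f q‖) (Metric.ball (0 : ℍ[ℝ]) R \ E) p) :
    ∃ w : ℍ[ℝ], ∀ q ∈ Metric.ball (0 : ℍ[ℝ]) R \ E, f q = w := by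
  set Ω : Set ℍ[ℝ] := Metric.ball (0 : ℍ[ℝ]) R \ E with hΩdef
  have hR : 0 < R := lt_of_le_of_lt dist_nonneg (mem_ball.1 hp.1)
  -- countability of slice preimages of E
  have hcount : ∀ (I : ℍ[ℝ]), I * I = -1 → (mmPhi I ⁻¹' E).Countable := by
    intro I hI
    apply mm_countable_of_loc_finite
    intro z hz
    obtain ⟨S, heS, hSE, hSshape, U, hUopen, hSU, hUE⟩ := hEiso _ hz
    refine ⟨mmPhi I ⁻¹' U, (hUopen.preimage (mm_phi_continuous I)).mem_nhds (hSU heS), ?_⟩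
    have hVE : mmPhi I ⁻¹' U ∩ mmPhi I ⁻¹' E = mmPhi I ⁻¹' S := by
      rw [← Set.preimage_inter, hUE]
    rw [hVE]
    rcases hSshape with ⟨q0, rfl⟩ | ⟨x, y, hy, rfl⟩
    · exact Set.Subsingleton.finite (fun a ha b hb => mm_phi_inj hI (ha.trans hb.symm))
    · apply Set.Finite.subset ((Set.finite_singleton (Complex.mk x (-y))).insert (Complex.mk x y))
      intro u hu
      obtain ⟨K, hK2, hueq⟩ := hu
      have hK : K * K = -1 := by rw [← sq]; exact hK2
      have hre : u.re = x := by
        have := congrArg QuaternionAlgebra.re hueq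
        simpa [mmPhi, Quaternion.re_smul, mm_re_eq_zero hI, mm_re_eq_zero hK] using this
      have hsm : u.im • I = y • K := by
        have h2 : ((u.re : ℝ) : ℍ[ℝ]) + u.im • I = ((x : ℝ) : ℍ[ℝ]) + y • K := hueq
        rw [hre] at h2
        exact add_left_cancel h2
      have hnorm : |u.im| = |y| := by
        have h3 := congrArg norm hsm
        rw [norm_smul, norm_smul, mm_norm_eq_one hI, mm_norm_eq_one hK] at h3
        simpa [Real.norm_eq_abs] using h3
      rw [Set.mem_insert_iff, Set.mem_singleton_iff]
      rcases abs_eq_abs.1 hnorm with h4 | h4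
      · exact Or.inl (Complex.ext hre h4)
      · exact Or.inr (Complex.ext hre h4)
  have hpre : ∀ (I : ℍ[ℝ]), I * I = -1 →
      mmPhi I ⁻¹' Ω = Metric.ball (0 : ℂ) R \ (mmPhi I ⁻¹' E) := by
    intro I hI
    rw [hΩdef, Set.preimage_diff]
    congr 1
    ext z
    simp only [Set.mem_preimage, mem_ball, dist_zero_right, mm_norm_phi hI]
  have hconn : ∀ (I : ℍ[ℝ]), I * I = -1 → IsPreconnected (mmPhi I ⁻¹' Ω) := by
    intro I hI
    rw [hpre I hI]
    exact mm_preconnected_ball_diff_countable (hcount I hI)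
  -- slice through p
  obtain ⟨Ip, zp, hIp, hzp⟩ := mm_exists_slice p
  -- a ball around p where the max is attained
  obtain ⟨u, huo, hpu, husub⟩ := mem_nhdsWithin.1 hmax
  obtain ⟨ε, hε, hball⟩ := Metric.isOpen_iff.1 (huo.inter hopen) p ⟨hpu, hp⟩
  have hballΩ : Metric.ball p ε ⊆ Ω := fun q hq => (hball hq).2
  have hmax' : ∀ q ∈ Metric.ball p ε, ‖f q‖ ≤ ‖f p‖ := by
    intro q hq
    exact husub ⟨(hball hq).1, (hball hq).2⟩
  -- constancy near p on the slice of p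
  have hDp : ∀ z ∈ Metric.ball zp ε, f (mmPhi Ip z) = f p := by
    have := mm_max Ω f hf Ip hIp zp ε (by rw [hzp]; exact hballΩ) (by rw [hzp]; exact hmax')
    intro z hz
    rw [← hzp]
    exact this z hz
  haveI hNB : ∀ z : ℂ, (nhdsWithin z {z}ᶜ).NeBot := fun z => NormedField.nhdsNE_neBot z
  have hfreq_p : ∃ᶠ z in nhdsWithin zp {zp}ᶜ, f (mmPhi Ip z) = f p := by
    have hev : ∀ᶠ z in nhds zp, f (mmPhi Ip z) = f p :=
      Filter.eventually_of_mem (Metric.ball_mem_nhds zp hε) hDp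
    exact (hev.filter_mono nhdsWithin_le_nhds).frequently
  have hslice_p : ∀ z : ℂ, mmPhi Ip z ∈ Ω → f (mmPhi Ip z) = f p :=
    mm_eqOn Ω hopen f hf Ip hIp (hconn Ip hIp) (f p) zp (by rw [hzp]; exact hp) hfreq_p
  have hreal : ∀ t : ℝ, (t : ℍ[ℝ]) ∈ Ω → f ((t : ℍ[ℝ])) = f p := by
    intro t ht
    have := hslice_p (t : ℂ) (by rw [mm_phi_real]; exact ht)
    rwa [mm_phi_real] at this
  -- there is a real point in Ω
  have hreal_pt : ∃ t₀ : ℝ, (t₀ : ℍ[ℝ]) ∈ Ω := by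
    by_contra hcon
    push_neg at hcon
    have hsub : ∀ t : ℝ, |t| < R → (t : ℍ[ℝ]) ∈ E := by
      intro t ht
      by_contra htE
      exact hcon t ⟨by rw [mem_ball, dist_zero_right, Quaternion.norm_coe]; exact ht, htE⟩
    have h0 : ((0 : ℝ) : ℍ[ℝ]) ∈ E := hsub 0 (by simpa using hR)
    obtain ⟨S, heS, hSE, hSshape, U, hUopen, hSU, hUE⟩ := hEiso _ h0
    have hSsing : S = ({((0 : ℝ) : ℍ[ℝ])} : Set ℍ[ℝ]) := by
      rcases hSshape with ⟨q0, rfl⟩ | ⟨x, y, hy, rfl⟩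
      · have : ((0 : ℝ) : ℍ[ℝ]) = q0 := heS
        rw [← this]
      · exfalso
        obtain ⟨K, hK2, hKeq⟩ := heS
        have hKK : K * K = -1 := by rw [← sq]; exact hK2
        have hre : (0 : ℝ) = x := by
          have := congrArg QuaternionAlgebra.re hKeq
          simpa [Quaternion.re_smul, mm_re_eq_zero hKK] using this
        have hyK : y • K = 0 := by
          rw [← hre] at hKeq
          have := hKeq.symm
          simpa using this
        have hK0 : K = 0 := (smul_eq_zero.1 hyK).resolve_left hy
        rw [hK0] at hKK
        simpa using hKK
    have hU0 : ((0 : ℝ) : ℍ[ℝ]) ∈ U := hSU (by rw [hSsing]; exact rfl)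
    obtain ⟨δ, hδ, hδsub⟩ := Metric.isOpen_iff.1
      (hUopen.preimage Quaternion.continuous_coe) 0 (by simpa using hU0)
    set t := min δ R / 2 with htdef
    have htpos : 0 < t := by
      have : 0 < min δ R := lt_min hδ hR
      positivity
    have htlt : ∀ {c : ℝ}, 0 < c → min δ R ≤ c → |t| < c := by
      intro c hc hmin
      rw [abs_of_pos htpos, htdef]
      linarith
    have htU : (t : ℍ[ℝ]) ∈ U := by
      apply hδsub
      rw [mem_ball, dist_zero_right, Real.norm_eq_abs]
      exact htlt hδ (min_le_left _ _)
    have htE : (t : ℍ[ℝ]) ∈ E := hsub t (htlt hR (min_le_right _ _))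
    have : (t : ℍ[ℝ]) ∈ S := by rw [← hUE]; exact ⟨htU, htE⟩
    rw [hSsing] at this
    have ht0 : (t : ℍ[ℝ]) = ((0 : ℝ) : ℍ[ℝ]) := this
    have : t = 0 := by
      have := congrArg QuaternionAlgebra.re ht0
      simpa using this
    exact absurd this (ne_of_gt htpos)
  obtain ⟨t₀, ht₀⟩ := hreal_pt
  refine ⟨f p, fun q hq => ?_⟩
  obtain ⟨J, zq, hJ, hzq⟩ := mm_exists_slice q
  have htend : Filter.Tendsto (fun t : ℝ => (t : ℂ)) (nhdsWithin t₀ {t₀}ᶜ)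
      (nhdsWithin (t₀ : ℂ) {(t₀ : ℂ)}ᶜ) := by
    apply tendsto_nhdsWithin_of_tendsto_nhds_of_eventually_within
    · exact (Complex.continuous_ofReal.tendsto t₀).mono_left nhdsWithin_le_nhds
    · apply Filter.eventually_of_mem self_mem_nhdsWithin
      intro s hs
      simp only [Set.mem_compl_iff, Set.mem_singleton_iff] at hs ⊢
      exact fun h => hs (Complex.ofReal_inj.1 h)
  have hfreqJ : ∃ᶠ z in nhdsWithin ((t₀ : ℝ) : ℂ) {((t₀ : ℝ) : ℂ)}ᶜ, f (mmPhi J z) = f p := by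
    apply htend.frequently
    have hmem : {t : ℝ | (t : ℍ[ℝ]) ∈ Ω} ∈ nhds t₀ :=
      (hopen.preimage Quaternion.continuous_coe).mem_nhds ht₀
    have hfreqR : ∃ᶠ s : ℝ in nhdsWithin t₀ {t₀}ᶜ, ((s : ℝ) : ℍ[ℝ]) ∈ Ω :=
      ((Filter.eventually_of_mem hmem (fun s hs => hs)).filter_mono
        nhdsWithin_le_nhds).frequently
    apply hfreqR.mono
    intro s hs
    rw [mm_phi_real]
    exact hreal s hs
  have := mm_eqOn Ω hopen f hf J hJ (hconn J hJ) (f p) ((t₀ : ℝ) : ℂ)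
    (by rw [mm_phi_real]; exact ht₀) hfreqJ zq (by rw [hzq]; exact hq)
  rwa [hzq] at this
end

section
/- Let f : B(0,R) → ℍ be a non-constant regular function and let D_f = ⋃{x + y𝕊 : x, y ∈ ℝ, y > 0, x + y𝕊 ⊆ B(0,R), f is constant on x + y𝕊} be its degenerate set. Then D_f is closed in B(0,R) ∖ ℝ and has empty interior. -/
open Quaternion

/-- The degenerate set of `f`: the union of all 2-spheres `x + y𝕊` (`y > 0`)
contained in `B(0,R)` on which `f` is constant. -/
def degenerateSet (R : ℝ) (f : ℍ[ℝ] → ℍ[ℝ]) : Set ℍ[ℝ] :=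
  {q | ∃ x y : ℝ, y > 0 ∧ sphereSet x y ⊆ Metric.ball (0 : ℍ[ℝ]) R ∧
    (∃ w : ℍ[ℝ], ∀ p ∈ sphereSet x y, f p = w) ∧ q ∈ sphereSet x y}

open Metric Filter Complex Topology

noncomputable section

lemma sq_neg_one_iff {K : ℍ[ℝ]} : K ^ 2 = -1 ↔ K.re = 0 ∧ normSq K = 1 := by
  rw [pow_two]
  constructor
  · intro h
    have h1 := congrArg QuaternionAlgebra.re h
    have h2 := congrArg QuaternionAlgebra.imI h
    have h3 := congrArg QuaternionAlgebra.imJ h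
    have h4 := congrArg QuaternionAlgebra.imK h
    simp only [Quaternion.re_mul, Quaternion.imI_mul, Quaternion.imJ_mul, Quaternion.imK_mul,
      Quaternion.re_neg, Quaternion.imI_neg, Quaternion.imJ_neg, Quaternion.imK_neg,
      Quaternion.re_one, Quaternion.imI_one, Quaternion.imJ_one, Quaternion.imK_one,
      neg_zero] at h1 h2 h3 h4
    have hre : K.re = 0 := by nlinarith [sq_nonneg K.re, sq_nonneg K.imI, sq_nonneg K.imJ, sq_nonneg K.imK]
    refine ⟨hre, ?_⟩
    rw [Quaternion.normSq_def']
    nlinarith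
  · rintro ⟨h0, h1⟩
    rw [Quaternion.normSq_def'] at h1
    ext <;> simp only [Quaternion.re_mul, Quaternion.imI_mul, Quaternion.imJ_mul,
      Quaternion.imK_mul, Quaternion.re_neg, Quaternion.imI_neg, Quaternion.imJ_neg,
      Quaternion.imK_neg, Quaternion.re_one, Quaternion.imI_one, Quaternion.imJ_one,
      Quaternion.imK_one, neg_zero, h0] <;> nlinarith

lemma normSq_shape (x y : ℝ) {K : ℍ[ℝ]} (hK : K ^ 2 = -1) :
    normSq ((x : ℍ[ℝ]) + y • K) = x ^ 2 + y ^ 2 := by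
  obtain ⟨h0, h1⟩ := sq_neg_one_iff.mp hK
  rw [Quaternion.normSq_def'] at h1 ⊢
  simp only [Quaternion.re_add, Quaternion.imI_add, Quaternion.imJ_add, Quaternion.imK_add,
    Quaternion.re_coe, Quaternion.imI_coe, Quaternion.imJ_coe, Quaternion.imK_coe,
    Quaternion.re_smul, Quaternion.imI_smul, Quaternion.imJ_smul, Quaternion.imK_smul,
    smul_eq_mul, h0, mul_zero, add_zero, zero_add]
  rw [h0] at h1
  linear_combination y ^ 2 * h1

lemma norm_shape (x y : ℝ) {K : ℍ[ℝ]} (hK : K ^ 2 = -1) :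
    ‖(x : ℍ[ℝ]) + y • K‖ * ‖(x : ℍ[ℝ]) + y • K‖ = x ^ 2 + y ^ 2 := by
  rw [← Quaternion.normSq_eq_norm_mul_self, normSq_shape x y hK]

lemma mem_props {x y : ℝ} {q : ℍ[ℝ]} (hy : 0 < y) (hq : q ∈ sphereSet x y) :
    q.re = x ∧ ‖q.im‖ = y ∧ ‖q‖ * ‖q‖ = x ^ 2 + y ^ 2 := by
  obtain ⟨K, hK, rfl⟩ := hq
  obtain ⟨h0, h1⟩ := sq_neg_one_iff.mp hK
  have hre : ((x : ℍ[ℝ]) + y • K).re = x := by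
    simp [Quaternion.re_add, Quaternion.re_coe, Quaternion.re_smul, h0]
  refine ⟨hre, ?_, norm_shape x y hK⟩
  have him : ‖((x : ℍ[ℝ]) + y • K).im‖ * ‖((x : ℍ[ℝ]) + y • K).im‖ = y * y := by
    rw [← Quaternion.normSq_eq_norm_mul_self, Quaternion.normSq_def']
    rw [Quaternion.normSq_def'] at h1
    simp only [Quaternion.re_im, Quaternion.imI_im, Quaternion.imJ_im, Quaternion.imK_im,
      Quaternion.imI_add, Quaternion.imJ_add, Quaternion.imK_add, Quaternion.imI_coe,
      Quaternion.imJ_coe, Quaternion.imK_coe, Quaternion.imI_smul, Quaternion.imJ_smul,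
      Quaternion.imK_smul, smul_eq_mul, zero_add]
    rw [h0] at h1
    linear_combination y * y * h1
  exact (mul_self_inj (norm_nonneg ((x : ℍ[ℝ]) + y • K).im) hy.le).mp him

lemma self_mem {q : ℍ[ℝ]} (hq : q.im ≠ 0) : q ∈ sphereSet q.re ‖q.im‖ := by
  have hn : ‖q.im‖ ≠ 0 := norm_ne_zero_iff.mpr hq
  refine ⟨‖q.im‖⁻¹ • q.im, ?_, ?_⟩
  · rw [sq_neg_one_iff]
    constructor
    · simp [Quaternion.re_smul]
    · have : normSq q.im = ‖q.im‖ * ‖q.im‖ := Quaternion.normSq_eq_norm_mul_self _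
      rw [Quaternion.normSq_smul]
      rw [this]
      field_simp
  · rw [smul_inv_smul₀ hn, Quaternion.re_add_im]



noncomputable def pSeries (a : ℕ → ℍ[ℝ]) : FormalMultilinearSeries ℝ ℍ[ℝ] ℍ[ℝ] :=
  fun n => ((ContinuousLinearMap.mul ℝ ℍ[ℝ]).flip (a n)).compContinuousMultilinearMap
    (ContinuousMultilinearMap.mkPiAlgebraFin ℝ n ℍ[ℝ])

lemma pSeries_apply (a : ℕ → ℍ[ℝ]) (n : ℕ) (q : ℍ[ℝ]) :
    pSeries a n (fun _ => q) = q ^ n * a n := by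
  simp [pSeries, List.prod_ofFn, List.ofFn_const]

lemma pSeries_norm_le (a : ℕ → ℍ[ℝ]) (n : ℕ) : ‖pSeries a n‖ ≤ ‖a n‖ := by
  refine le_trans (ContinuousLinearMap.norm_compContinuousMultilinearMap_le _ _) ?_
  have h1 : ‖(ContinuousLinearMap.mul ℝ ℍ[ℝ]).flip (a n)‖ ≤ ‖a n‖ := by
    refine ContinuousLinearMap.opNorm_le_bound _ (norm_nonneg _) fun b => ?_
    simp only [ContinuousLinearMap.flip_apply, ContinuousLinearMap.mul_apply']
    rw [norm_mul, mul_comm]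
  calc _ ≤ ‖a n‖ * ‖ContinuousMultilinearMap.mkPiAlgebraFin ℝ n ℍ[ℝ]‖ := by
          exact mul_le_mul_of_nonneg_right h1 (norm_nonneg _)
    _ = ‖a n‖ := by rw [ContinuousMultilinearMap.norm_mkPiAlgebraFin, mul_one]

lemma summable_coeff {R : ℝ} {a : ℕ → ℍ[ℝ]} {f : ℍ[ℝ] → ℍ[ℝ]}
    (hf : ∀ q ∈ Metric.ball (0 : ℍ[ℝ]) R, HasSum (fun n => q ^ n * a n) (f q))
    {r : ℝ} (h0 : 0 ≤ r) (hr : r < R) : Summable (fun n => ‖a n‖ * r ^ n) := by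
  have hmem : ((r : ℝ) : ℍ[ℝ]) ∈ Metric.ball (0 : ℍ[ℝ]) R := by
    rw [mem_ball_zero_iff, Quaternion.norm_coe, Real.norm_eq_abs, _root_.abs_of_nonneg h0]
    exact hr
  have hs : Summable (fun n => ((r : ℍ[ℝ]) ^ n * a n)) := (hf _ hmem).summable
  have := hs.norm
  refine this.congr fun n => ?_
  rw [norm_mul, norm_pow, Quaternion.norm_coe, Real.norm_eq_abs, _root_.abs_of_nonneg h0, mul_comm]

lemma hasFPS {R : ℝ} {a : ℕ → ℍ[ℝ]} {f : ℍ[ℝ] → ℍ[ℝ]} (hR : 0 < R)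
    (hf : ∀ q ∈ Metric.ball (0 : ℍ[ℝ]) R, HasSum (fun n => q ^ n * a n) (f q)) :
    HasFPowerSeriesOnBall f (pSeries a) 0 (ENNReal.ofReal R) := by
  constructor
  · refine ENNReal.le_of_forall_nnreal_lt fun r hr => ?_
    have hrR : (r : ℝ) < R := by
      have := (ENNReal.lt_ofReal_iff_toReal_lt (by simp)).mp hr
      simpa using this
    refine FormalMultilinearSeries.le_radius_of_summable_norm _ ?_
    refine Summable.of_nonneg_of_le (fun n => by positivity) (fun n => ?_)
      (summable_coeff hf r.2 hrR)
    exact mul_le_mul_of_nonneg_right (pSeries_norm_le a n) (by positivity)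
  · exact ENNReal.ofReal_pos.mpr hR
  · intro y hy
    rw [Metric.emetric_ball] at hy
    simp only [zero_add, pSeries_apply]
    exact hf y (by simpa using hy)

lemma f_eq_on_ball {R : ℝ} {a : ℕ → ℍ[ℝ]} {f : ℍ[ℝ] → ℍ[ℝ]} (hR : 0 < R)
    (hf : ∀ q ∈ Metric.ball (0 : ℍ[ℝ]) R, HasSum (fun n => q ^ n * a n) (f q)) :
    AnalyticOnNhd ℝ f (Metric.ball (0 : ℍ[ℝ]) R) := by
  have h := (hasFPS hR hf).analyticOnNhd
  rwa [Metric.emetric_ball] at h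




def qi : ℍ[ℝ] := ⟨0, 1, 0, 0⟩

lemma qi_norm : ‖qi‖ = 1 := by
  have h : normSq qi = 1 := by rw [Quaternion.normSq_def']; simp [qi]
  have := Quaternion.normSq_eq_norm_mul_self qi
  rw [h] at this
  nlinarith [norm_nonneg qi]

lemma qi_ne_zero : qi ≠ 0 := by
  intro h
  have := qi_norm
  rw [h, norm_zero] at this
  norm_num at this

def phi : ℂ →+* ℍ[ℝ] where
  toFun z := ⟨z.re, z.im, 0, 0⟩
  map_one' := by ext <;> simp
  map_mul' z w := by
    ext
    · refine Eq.trans ?_ (Quaternion.re_mul _ _).symm; simp [Complex.mul_re]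
    · refine Eq.trans ?_ (Quaternion.imI_mul _ _).symm; simp [Complex.mul_im]
    · refine Eq.trans ?_ (Quaternion.imJ_mul _ _).symm; simp
    · refine Eq.trans ?_ (Quaternion.imK_mul _ _).symm; simp
  map_zero' := by ext <;> simp
  map_add' z w := by
    ext
    · refine Eq.trans ?_ (Quaternion.re_add _ _).symm; simp
    · refine Eq.trans ?_ (Quaternion.imI_add _ _).symm; simp
    · refine Eq.trans ?_ (Quaternion.imJ_add _ _).symm; simp
    · refine Eq.trans ?_ (Quaternion.imK_add _ _).symm; simp

@[simp] lemma phi_re (z : ℂ) : (phi z).re = z.re := rfl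
@[simp] lemma phi_imI (z : ℂ) : (phi z).imI = z.im := rfl
@[simp] lemma phi_imJ (z : ℂ) : (phi z).imJ = 0 := rfl
@[simp] lemma phi_imK (z : ℂ) : (phi z).imK = 0 := rfl
@[simp] lemma qi_re : qi.re = 0 := rfl
@[simp] lemma qi_imI : qi.imI = 1 := rfl
@[simp] lemma qi_imJ : qi.imJ = 0 := rfl
@[simp] lemma qi_imK : qi.imK = 0 := rfl

lemma phi_norm (z : ℂ) : ‖phi z‖ = ‖z‖ := by
  have h : normSq (phi z) = ‖z‖ * ‖z‖ := by
    rw [Quaternion.normSq_def', ← sq, ← Complex.normSq_eq_norm_sq]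
    simp [Complex.normSq_apply]
    ring
  have h2 := Quaternion.normSq_eq_norm_mul_self (phi z)
  rw [h] at h2
  exact (mul_self_inj (norm_nonneg _) (norm_nonneg _)).mp h2.symm

lemma star_phi (z : ℂ) : star (phi z) = phi ((starRingEnd ℂ) z) := by
  ext <;> simp

lemma phi_sub_phi (w : ℂ) : phi w - phi ((starRingEnd ℂ) w) = (2 * w.im) • qi := by
  ext <;> simp <;> ring


lemma summable_aux {R : ℝ} {a : ℕ → ℍ[ℝ]} {f : ℍ[ℝ] → ℍ[ℝ]}
    (hf : ∀ q ∈ Metric.ball (0 : ℍ[ℝ]) R, HasSum (fun n => q ^ n * a n) (f q))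
    {ρ : ℝ} (h0 : 0 ≤ ρ) (hρR : ρ < R) :
    Summable (fun n : ℕ => (((n : ℝ) + 1) * ρ ^ n) * ‖a (n + 1)‖) := by
  set r : ℝ := (ρ + R) / 2 with hr
  have hρr : ρ < r := by rw [hr]; linarith
  have hr0 : 0 < r := lt_of_le_of_lt h0 hρr
  have hrR : r < R := by rw [hr]; linarith
  have hs : Summable (fun n => ‖a n‖ * r ^ n) := summable_coeff hf hr0.le hrR
  set C : ℝ := ∑' n, ‖a n‖ * r ^ n with hC
  have hle : ∀ n, ‖a n‖ * r ^ n ≤ C := fun n =>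
    hs.le_tsum n fun m _ => by positivity
  clear_value r C
  have ht : |ρ / r| < 1 := by
    rw [_root_.abs_of_nonneg (by positivity)]
    rw [div_lt_one hr0]
    exact hρr
  have hgeom : Summable (fun n : ℕ => ((n : ℝ) + 1) * (ρ / r) ^ n) := by
    have h1 : Summable (fun n : ℕ => (n : ℝ) * (ρ / r) ^ n) := by
      have := summable_pow_mul_geometric_of_norm_lt_one (R := ℝ) 1 (by rwa [Real.norm_eq_abs])
      simpa using this
    have h2 : Summable (fun n : ℕ => (ρ / r) ^ n) :=
      summable_geometric_of_lt_one (by positivity) (by rwa [_root_.abs_of_nonneg (by positivity)] at ht)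
    simpa [add_mul, one_mul] using h1.add h2
  refine Summable.of_nonneg_of_le (fun n => by positivity) (fun n => ?_) (hgeom.mul_left (C / r))
  have h1 : ‖a (n + 1)‖ ≤ C / r ^ (n + 1) := by
    rw [le_div_iff₀ (by positivity)]
    exact hle (n + 1)
  calc ((n : ℝ) + 1) * ρ ^ n * ‖a (n + 1)‖ ≤ ((n : ℝ) + 1) * ρ ^ n * (C / r ^ (n + 1)) := by
        apply mul_le_mul_of_nonneg_left h1 (by positivity)
    _ = C / r * (((n : ℝ) + 1) * (ρ / r) ^ n) := by
        have hrne : r ≠ 0 := ne_of_gt hr0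
        rw [div_pow, pow_succ]
        field_simp

lemma step1_lemma {R : ℝ} {a : ℕ → ℍ[ℝ]} {f : ℍ[ℝ] → ℍ[ℝ]}
    (hf : ∀ q ∈ Metric.ball (0 : ℍ[ℝ]) R, HasSum (fun n => q ^ n * a n) (f q))
    (hstar : ∀ q ∈ Metric.ball (0 : ℍ[ℝ]) R, f q = f (star q)) :
    ∀ z : ℂ, ‖z‖ < R → HasSum (fun n => (z ^ n).im • (qi * a n)) 0 := by
  intro z hz
  have hz1 : phi z ∈ Metric.ball (0 : ℍ[ℝ]) R := by
    rw [mem_ball_zero_iff, phi_norm]; exact hz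
  have hz2 : phi ((starRingEnd ℂ) z) ∈ Metric.ball (0 : ℍ[ℝ]) R := by
    rw [mem_ball_zero_iff, phi_norm, Complex.norm_conj]; exact hz
  have h1 := hf _ hz1
  have h2 := hf _ hz2
  have heq : f (phi ((starRingEnd ℂ) z)) = f (phi z) := by
    rw [← star_phi]; exact (hstar _ hz1).symm
  rw [heq] at h2
  have h3 := h1.sub h2
  rw [sub_self] at h3
  have h4 : ∀ n, (phi z) ^ n * a n - (phi ((starRingEnd ℂ) z)) ^ n * a n
      = (2 * (z ^ n).im) • (qi * a n) := by
    intro n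
    rw [← map_pow, ← map_pow, ← map_pow, ← sub_mul, phi_sub_phi, smul_mul_assoc]
  have h5 : HasSum (fun n => (2 * (z ^ n).im) • (qi * a n)) 0 := by
    simpa only [h4] using h3
  have h6 := h5.const_smul ((2 : ℝ)⁻¹)
  rw [smul_zero] at h6
  have h7 : ∀ n, (z ^ n).im • (qi * a n) = (2 : ℝ)⁻¹ • ((2 * (z ^ n).im) • (qi * a n)) := by
    intro n
    rw [smul_smul]
    congr 1
    ring
  simp_rw [h7]
  exact h6

lemma step2_lemma {R : ℝ} {a : ℕ → ℍ[ℝ]} {f : ℍ[ℝ] → ℍ[ℝ]}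
    (hf : ∀ q ∈ Metric.ball (0 : ℍ[ℝ]) R, HasSum (fun n => q ^ n * a n) (f q))
    (hstar : ∀ q ∈ Metric.ball (0 : ℍ[ℝ]) R, f q = f (star q))
    {x : ℝ} (hx : |x| < R) :
    HasSum (fun n : ℕ => ((n : ℝ) * x ^ (n - 1)) • (qi * a n)) 0 := by
  have hR : 0 < R := lt_of_le_of_lt (abs_nonneg x) hx
  set ρ : ℝ := (|x| + R) / 2 with hρ
  have hρ0 : 0 < ρ := by rw [hρ]; have := abs_nonneg x; linarith
  have hxρ : |x| < ρ := by rw [hρ]; linarith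
  have hρR : ρ < R := by rw [hρ]; linarith
  set bound : ℕ → ℝ := fun n => (n : ℝ) * ρ ^ (n - 1) * ‖a n‖ with hbound
  have hbsum : Summable bound := by
    rw [← summable_nat_add_iff 1]
    refine (summable_aux hf hρ0.le hρR).congr fun n => ?_
    simp only [hbound, Nat.add_sub_cancel]
    push_cast
    ring
  set F : ℝ → ℕ → ℍ[ℝ] :=
    fun y n => ((((x : ℂ) + y * Complex.I) ^ n).im / y) • (qi * a n) with hF
  have hlim : ∀ n : ℕ, Tendsto (fun y => F y n) (𝓝[≠] (0 : ℝ))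
      (𝓝 (((n : ℝ) * x ^ (n - 1)) • (qi * a n))) := by
    intro n
    have h1 : HasDerivAt (fun y : ℝ => (x : ℂ) + y * Complex.I) Complex.I 0 := by
      have h0 : HasDerivAt (fun y : ℝ => (y : ℂ)) ((1 : ℝ) : ℂ) 0 :=
        (hasDerivAt_id (0 : ℝ)).ofReal_comp
      have h0' := (h0.mul_const Complex.I).const_add ((x : ℂ))
      simpa using h0'
    have h2 : HasDerivAt (fun w : ℂ => w ^ n)
        ((n : ℂ) * ((x : ℂ) + (0 : ℝ) * Complex.I) ^ (n - 1))
        ((x : ℂ) + (0 : ℝ) * Complex.I) := hasDerivAt_pow n _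
    have h3 := h2.scomp (0 : ℝ) h1
    have h4 := Complex.imCLM.hasFDerivAt.comp_hasDerivAt (0 : ℝ) h3
    have h5 : HasDerivAt (fun y : ℝ => (((x : ℂ) + y * Complex.I) ^ n).im)
        ((n : ℝ) * x ^ (n - 1)) 0 := by
      refine HasDerivAt.congr_deriv h4 ?_
      simp [Complex.ofReal_zero, zero_mul, add_zero, ← Complex.ofReal_pow]
    rw [hasDerivAt_iff_tendsto_slope] at h5
    have h6 : Tendsto (fun y : ℝ => (((x : ℂ) + y * Complex.I) ^ n).im / y)
        (𝓝[≠] (0 : ℝ)) (𝓝 ((n : ℝ) * x ^ (n - 1))) := by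
      refine h5.congr' ?_
      filter_upwards [self_mem_nhdsWithin] with y hy
      rw [slope_def_field]
      simp [← Complex.ofReal_pow]
    exact h6.smul_const (qi * a n)
  have hmem : ∀ᶠ y in 𝓝[≠] (0 : ℝ), |y| < ρ - |x| := by
    have h1 : ∀ᶠ y in 𝓝 (0 : ℝ), |y| < ρ - |x| := by
      filter_upwards [Metric.ball_mem_nhds (0 : ℝ) (show (0 : ℝ) < ρ - |x| by linarith)]
        with y hy
      simpa [Real.dist_eq] using hy
    exact h1.filter_mono nhdsWithin_le_nhds
  have habs : ∀ y : ℝ, |y| < ρ - |x| → ‖(x : ℂ) + y * Complex.I‖ ≤ ρ := by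
    intro y hy
    calc ‖(x : ℂ) + y * Complex.I‖
        ≤ ‖(x : ℂ)‖ + ‖(y : ℂ) * Complex.I‖ := norm_add_le _ _
      _ = |x| + |y| := by rw [norm_mul, Complex.norm_I, mul_one, Complex.norm_real,
          Complex.norm_real, Real.norm_eq_abs, Real.norm_eq_abs]
      _ ≤ ρ := by linarith
  have hbd : ∀ᶠ y in 𝓝[≠] (0 : ℝ), ∀ n, ‖F y n‖ ≤ bound n := by
    filter_upwards [hmem, self_mem_nhdsWithin] with y hy hy0 n
    have hy0' : y ≠ 0 := hy0
    set z : ℂ := (x : ℂ) + y * Complex.I with hzdef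
    have hzabs : ‖z‖ ≤ ρ := habs y hy
    have him : |(z ^ n).im| ≤ (n : ℝ) * |y| * ρ ^ (n - 1) := by
      have key : z ^ n - (starRingEnd ℂ) (z ^ n)
          = (∑ i ∈ Finset.range n, z ^ i * ((starRingEnd ℂ) z) ^ (n - 1 - i))
            * (z - (starRingEnd ℂ) z) := by
        rw [map_pow, geom_sum₂_mul]
      have h2i : ‖z ^ n - (starRingEnd ℂ) (z ^ n)‖ = 2 * |(z ^ n).im| := by
        rw [Complex.sub_conj, norm_mul, Complex.norm_I, mul_one, Complex.norm_real, Real.norm_eq_abs, abs_mul]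
        norm_num
      have hzc : ‖z - (starRingEnd ℂ) z‖ = 2 * |y| := by
        rw [Complex.sub_conj, norm_mul, Complex.norm_I, mul_one, Complex.norm_real, Real.norm_eq_abs]
        have : z.im = y := by simp [hzdef]
        rw [this, abs_mul]
        norm_num
      have hsum : ‖∑ i ∈ Finset.range n, z ^ i * ((starRingEnd ℂ) z) ^ (n - 1 - i)‖
          ≤ (n : ℝ) * ρ ^ (n - 1) := by
        refine le_trans (norm_sum_le _ _) ?_
        have hterm : ∀ i ∈ Finset.range n,
            ‖z ^ i * ((starRingEnd ℂ) z) ^ (n - 1 - i)‖ ≤ ρ ^ (n - 1) := by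
          intro i hi
          rw [norm_mul, norm_pow, norm_pow, Complex.norm_conj, ← pow_add]
          have hin : i + (n - 1 - i) = n - 1 := by
            have := Finset.mem_range.mp hi
            omega
          rw [hin]
          exact pow_le_pow_left₀ (norm_nonneg z) hzabs _
        calc ∑ i ∈ Finset.range n, ‖z ^ i * ((starRingEnd ℂ) z) ^ (n - 1 - i)‖
            ≤ ∑ _i ∈ Finset.range n, ρ ^ (n - 1) := Finset.sum_le_sum hterm
          _ = (n : ℝ) * ρ ^ (n - 1) := by
            rw [Finset.sum_const, Finset.card_range, nsmul_eq_mul]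
      have hcomb := congrArg (‖·‖) key
      rw [h2i, norm_mul, hzc] at hcomb
      have habs_sum_nonneg := norm_nonneg
        (∑ i ∈ Finset.range n, z ^ i * ((starRingEnd ℂ) z) ^ (n - 1 - i))
      nlinarith [abs_nonneg y]
    have hqan : ‖qi * a n‖ = ‖a n‖ := by rw [norm_mul, qi_norm, one_mul]
    have hFn : ‖F y n‖ = |(z ^ n).im / y| * ‖a n‖ := by
      simp only [hF]
      rw [norm_smul, Real.norm_eq_abs, hqan]
    rw [hFn]
    have hyp : 0 < |y| := abs_pos.mpr hy0'
    have hdiv : |(z ^ n).im / y| ≤ (n : ℝ) * ρ ^ (n - 1) := by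
      rw [abs_div, div_le_iff₀ hyp]
      calc |(z ^ n).im| ≤ (n : ℝ) * |y| * ρ ^ (n - 1) := him
        _ = (n : ℝ) * ρ ^ (n - 1) * |y| := by ring
    calc |(z ^ n).im / y| * ‖a n‖ ≤ ((n : ℝ) * ρ ^ (n - 1)) * ‖a n‖ :=
          mul_le_mul_of_nonneg_right hdiv (norm_nonneg _)
      _ = bound n := by simp only [hbound]
  have hzero : ∀ᶠ y in 𝓝[≠] (0 : ℝ), (∑' n, F y n) = 0 := by
    filter_upwards [hmem, self_mem_nhdsWithin] with y hy hy0
    have hy0' : (y : ℝ) ≠ 0 := hy0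
    have habsR : ‖(x : ℂ) + y * Complex.I‖ < R :=
      lt_of_le_of_lt (habs y hy) hρR
    have h1 := step1_lemma hf hstar _ habsR
    have h2 := h1.const_smul (y⁻¹ : ℝ)
    rw [smul_zero] at h2
    have h3 : HasSum (fun n => F y n) 0 := by
      have heq : ∀ n, F y n
          = (y⁻¹ : ℝ) • ((((x : ℂ) + y * Complex.I) ^ n).im • (qi * a n)) := by
        intro n
        simp only [hF]
        rw [smul_smul, div_eq_inv_mul]
      simpa only [heq] using h2
    exact h3.tsum_eq
  have hDC := tendsto_tsum_of_dominated_convergence hbsum hlim hbd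
  have h0 : Tendsto (fun y => ∑' n, F y n) (𝓝[≠] (0 : ℝ)) (𝓝 0) :=
    Tendsto.congr' (by filter_upwards [hzero] with y hy using hy.symm) tendsto_const_nhds
  have huniq : (∑' (n : ℕ), ((n : ℝ) * x ^ (n - 1)) • (qi * a n)) = 0 :=
    tendsto_nhds_unique hDC h0
  have hsumm : Summable (fun n : ℕ => ((n : ℝ) * x ^ (n - 1)) • (qi * a n)) := by
    refine Summable.of_norm_bounded hbsum fun n => ?_
    have hqan : ‖qi * a n‖ = ‖a n‖ := by rw [norm_mul, qi_norm, one_mul]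
    rw [norm_smul, Real.norm_eq_abs, hqan]
    simp only [hbound]
    refine mul_le_mul_of_nonneg_right ?_ (norm_nonneg _)
    rw [abs_mul, Nat.abs_cast, _root_.abs_pow]
    refine mul_le_mul_of_nonneg_left ?_ (Nat.cast_nonneg n)
    exact pow_le_pow_left₀ (abs_nonneg x) hxρ.le _
  have := hsumm.hasSum
  rwa [huniq] at this

lemma coeff_eq_zero {R : ℝ} {a : ℕ → ℍ[ℝ]} {f : ℍ[ℝ] → ℍ[ℝ]} (hR : 0 < R)
    (hf : ∀ q ∈ Metric.ball (0 : ℍ[ℝ]) R, HasSum (fun n => q ^ n * a n) (f q))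
    (hstar : ∀ q ∈ Metric.ball (0 : ℍ[ℝ]) R, f q = f (star q)) :
    ∀ n, 1 ≤ n → a n = 0 := by
  set Q : FormalMultilinearSeries ℝ ℝ ℍ[ℝ] :=
    fun m => ContinuousMultilinearMap.mkPiRing ℝ (Fin m)
      (((m : ℝ) + 1) • (qi * a (m + 1))) with hQ
  have hQnorm : ∀ m, ‖Q m‖ = ((m : ℝ) + 1) * ‖a (m + 1)‖ := by
    intro m
    simp only [hQ]
    rw [ContinuousMultilinearMap.norm_mkPiRing, norm_smul, Real.norm_eq_abs,
      _root_.abs_of_nonneg (by positivity : (0:ℝ) ≤ (m : ℝ) + 1), norm_mul, qi_norm, one_mul]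
  have hQball : HasFPowerSeriesOnBall (fun _ : ℝ => (0 : ℍ[ℝ])) Q 0 (ENNReal.ofReal R) := by
    constructor
    · refine ENNReal.le_of_forall_nnreal_lt fun s hs => ?_
      have hsR : (s : ℝ) < R := by
        have := (ENNReal.lt_ofReal_iff_toReal_lt (by simp)).mp hs
        simpa using this
      refine FormalMultilinearSeries.le_radius_of_summable_norm _ ?_
      refine (summable_aux hf (NNReal.coe_nonneg s) hsR).congr fun m => ?_
      rw [hQnorm]
      push_cast
      ring
    · exact ENNReal.ofReal_pos.mpr hR
    · intro y hy
      rw [Metric.emetric_ball] at hy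
      have hyR : |y| < R := by simpa [Real.norm_eq_abs] using mem_ball_zero_iff.mp hy
      have h2 := step2_lemma hf hstar hyR
      have hzero0 : ((0 : ℕ) : ℝ) * y ^ (0 - 1) • (qi * a 0) = 0 := by simp
      have h2' : HasSum (fun m : ℕ => (((m + 1 : ℕ) : ℝ) * y ^ (m + 1 - 1)) • (qi * a (m + 1))) 0 := by
        refine (hasSum_nat_add_iff (f := fun n : ℕ => ((n : ℝ) * y ^ (n - 1)) • (qi * a n)) 1).mpr ?_
        simpa using h2
      suffices h : HasSum (fun m => Q m fun _ => y) 0 by simpa using h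
      have heq : ∀ m : ℕ, (Q m fun _ => y)
          = (((m + 1 : ℕ) : ℝ) * y ^ (m + 1 - 1)) • (qi * a (m + 1)) := by
        intro m
        simp only [hQ, ContinuousMultilinearMap.mkPiRing_apply, Finset.prod_const,
          Finset.card_univ, Fintype.card_fin]
        rw [smul_smul]
        congr 1
        push_cast [Nat.add_sub_cancel]
        ring
      simp only [heq]
      exact h2'
  have hQ0 : Q = 0 := by
    have h := hQball.hasFPowerSeriesAt
    exact HasFPowerSeriesAt.eq_zero (by exact h)
  intro n hn
  obtain ⟨m, rfl⟩ : ∃ m, n = m + 1 := ⟨n - 1, (Nat.succ_pred_eq_of_pos hn).symm⟩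
  have h1 : Q m = 0 := by rw [hQ0]; rfl
  have h2 : Q m (fun _ => (1 : ℝ)) = 0 := by rw [h1]; rfl
  simp only [hQ, ContinuousMultilinearMap.mkPiRing_apply] at h2
  rw [Finset.prod_const_one, one_smul] at h2
  have h3 : qi * a (m + 1) = 0 := by
    rcases smul_eq_zero.mp h2 with h | h
    · exfalso
      have hm : (0 : ℝ) ≤ (m : ℝ) := Nat.cast_nonneg m
      linarith
    · exact h
  rcases mul_eq_zero.mp h3 with h | h
  · exact absurd h qi_ne_zero
  · exact h

def starCLM : ℍ[ℝ] →L[ℝ] ℍ[ℝ] :=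
  ⟨{ toFun := star, map_add' := star_add, map_smul' := fun r q => by simp }, continuous_star⟩

@[simp] lemma starCLM_apply (q : ℍ[ℝ]) : starCLM q = star q := rfl

lemma star_mem_sphere {x y : ℝ} {q : ℍ[ℝ]} (hq : q ∈ sphereSet x y) :
    star q ∈ sphereSet x y := by
  obtain ⟨K, hK, rfl⟩ := hq
  obtain ⟨h0, h1⟩ := sq_neg_one_iff.mp hK
  refine ⟨-K, by rw [neg_sq]; exact hK, ?_⟩
  rw [star_add, Quaternion.star_coe, Quaternion.star_smul]
  congr 1
  congr 1
  ext <;> simp [h0]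

end

/-- For a non-constant regular function, the degenerate set is closed in
`B(0,R)` ∖ ℝ and has empty interior. -/
theorem degenerate_set_closed_empty_interior
    (R : ℝ) (a : ℕ → ℍ[ℝ]) (f : ℍ[ℝ] → ℍ[ℝ])
    (hf : ∀ q ∈ Metric.ball (0 : ℍ[ℝ]) R, HasSum (fun n => q ^ n * a n) (f q))
    (hnc : ¬∃ w : ℍ[ℝ], ∀ q ∈ Metric.ball (0 : ℍ[ℝ]) R, f q = w) :
    closure (degenerateSet R f) ∩
        (Metric.ball (0 : ℍ[ℝ]) R \ Set.range (fun x : ℝ => (x : ℍ[ℝ])))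
      ⊆ degenerateSet R f ∧
    interior (degenerateSet R f) = ∅ := by
  have hR : 0 < R := by
    by_contra h
    push_neg at h
    exact hnc ⟨0, fun q hq => absurd hq (by simp [Metric.ball_eq_empty.mpr h])⟩
  have hfa : AnalyticOnNhd ℝ f (Metric.ball (0 : ℍ[ℝ]) R) := f_eq_on_ball hR hf
  have hcont : ContinuousOn f (Metric.ball (0 : ℍ[ℝ]) R) := hfa.continuousOn
  have hDsub : degenerateSet R f ⊆ Metric.ball (0 : ℍ[ℝ]) R := by
    rintro q ⟨x, y, hy, hsub, hw, hq⟩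
    exact hsub hq
  constructor
  · rintro q ⟨hqcl, hqball, hqreal⟩
    have him : q.im ≠ 0 := by
      intro h
      refine hqreal ⟨q.re, ?_⟩
      show ((q.re : ℝ) : ℍ[ℝ]) = q
      conv_rhs => rw [← Quaternion.re_add_im q, h, add_zero]
    set x := q.re with hxdef
    set y := ‖q.im‖ with hydef
    have hy : 0 < y := norm_pos_iff.mpr him
    have hqmem : q ∈ sphereSet x y := self_mem him
    have hqnorm : ‖q‖ * ‖q‖ = x ^ 2 + y ^ 2 := (mem_props hy hqmem).2.2
    have hsubS : sphereSet x y ⊆ Metric.ball (0 : ℍ[ℝ]) R := by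
      rintro p ⟨K, hK, rfl⟩
      rw [mem_ball_zero_iff]
      have hp := norm_shape x y hK
      have hq' : ‖q‖ < R := mem_ball_zero_iff.mp hqball
      nlinarith [norm_nonneg ((x : ℍ[ℝ]) + y • K), norm_nonneg q]
    obtain ⟨u, hu, hulim⟩ := mem_closure_iff_seq_limit.mp hqcl
    refine ⟨x, y, hy, hsubS, ⟨f q, ?_⟩, hqmem⟩
    rintro p ⟨K, hK, rfl⟩
    set v : ℕ → ℍ[ℝ] := fun k => (((u k).re : ℍ[ℝ])) + ‖(u k).im‖ • K with hv
    have hvmem : ∀ k, v k ∈ sphereSet (u k).re ‖(u k).im‖ := fun k => ⟨K, hK, rfl⟩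
    have hfv : ∀ k, f (v k) = f (u k) := by
      intro k
      obtain ⟨x', y', hy', hsub', ⟨w, hw⟩, hqk⟩ := hu k
      obtain ⟨hx'e, hy'e, -⟩ := mem_props hy' hqk
      have hv' : v k ∈ sphereSet x' y' := by
        rw [← hx'e, ← hy'e]
        exact hvmem k
      rw [hw _ hv', hw _ hqk]
    have h1 : Tendsto (fun k => (u k).re) atTop (𝓝 x) :=
      (Quaternion.continuous_re.tendsto q).comp hulim
    have h2 : Tendsto (fun k => ‖(u k).im‖) atTop (𝓝 y) :=
      ((continuous_norm.comp Quaternion.continuous_im).tendsto q).comp hulim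
    have hvlim : Tendsto v atTop (𝓝 ((x : ℍ[ℝ]) + y • K)) :=
      (((Quaternion.continuous_coe).tendsto x).comp h1).add (h2.smul_const K)
    have hfp : Tendsto (fun k => f (v k)) atTop (𝓝 (f ((x : ℍ[ℝ]) + y • K))) :=
      ((hcont.continuousAt (Metric.isOpen_ball.mem_nhds (hsubS ⟨K, hK, rfl⟩))).tendsto).comp hvlim
    have hfq : Tendsto (fun k => f (u k)) atTop (𝓝 (f q)) :=
      ((hcont.continuousAt (Metric.isOpen_ball.mem_nhds hqball)).tendsto).comp hulim
    have h9 : Tendsto (fun k => f (v k)) atTop (𝓝 (f q)) :=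
      hfq.congr fun k => (hfv k).symm
    exact tendsto_nhds_unique hfp h9
  · by_contra hne
    obtain ⟨q₀, hq₀⟩ := Set.nonempty_iff_ne_empty.mpr hne
    have hq₀b : q₀ ∈ Metric.ball (0 : ℍ[ℝ]) R := hDsub (interior_subset hq₀)
    have hstar_an : AnalyticOnNhd ℝ (fun q => f (star q)) (Metric.ball (0 : ℍ[ℝ]) R) := by
      have h1 : AnalyticOnNhd ℝ (fun q : ℍ[ℝ] => starCLM q) (Metric.ball (0 : ℍ[ℝ]) R) :=
        starCLM.analyticOnNhd _
      have h2 : Set.MapsTo (fun q : ℍ[ℝ] => starCLM q) (Metric.ball (0 : ℍ[ℝ]) R)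
          (Metric.ball (0 : ℍ[ℝ]) R) := by
        intro p hp
        rw [mem_ball_zero_iff] at hp ⊢
        simpa [Quaternion.norm_star] using hp
      exact hfa.comp h1 h2
    have hg : AnalyticOnNhd ℝ (fun q => f q - f (star q)) (Metric.ball (0 : ℍ[ℝ]) R) :=
      hfa.sub hstar_an
    have hg0 : (fun q => f q - f (star q)) =ᶠ[𝓝 q₀] (0 : ℍ[ℝ] → ℍ[ℝ]) := by
      filter_upwards [isOpen_interior.mem_nhds hq₀] with p hp
      obtain ⟨x, y, hy, hsub', ⟨w, hw⟩, hpmem⟩ := interior_subset hp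
      show f p - f (star p) = 0
      rw [hw _ hpmem, hw _ (star_mem_sphere hpmem), sub_self]
    have hEq := hg.eqOn_zero_of_preconnected_of_eventuallyEq_zero
      ((convex_ball (0 : ℍ[ℝ]) R).isPreconnected) hq₀b hg0
    have hstar' : ∀ q ∈ Metric.ball (0 : ℍ[ℝ]) R, f q = f (star q) := by
      intro q hq
      have := hEq hq
      rw [← sub_eq_zero]
      simpa using this
    have hcoeff := coeff_eq_zero hR hf hstar'
    refine hnc ⟨a 0, fun q hq => ?_⟩
    have h1 := hf q hq
    have h2 : HasSum (fun n => q ^ n * a n) (q ^ 0 * a 0) := by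
      refine hasSum_single 0 fun n hn => ?_
      rw [hcoeff n (Nat.one_le_iff_ne_zero.mpr hn), mul_zero]
    rw [pow_zero, one_mul] at h2
    exact h1.unique h2
end

section
/- The regular function f(q) = q² + 1 on ℍ maps the open ball B(I, 1/2) centered at an imaginary unit I ∈ 𝕊 onto a non-open subset of ℍ: 0 ∈ f(B(I,1/2)), but for any K ∈ 𝕊 orthogonal to I, f(B(I,1/2)) ∩ L_K ⊆ ℝ, so f(B(I,1/2)) contains no open neighborhood of 0. -/
set_option maxHeartbeats 1000000
open Quaternion
open scoped RealInnerProductSpace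

lemma my_inner (a b : ℍ[ℝ]) : ⟪a,b⟫ = a.re*b.re + a.imI*b.imI + a.imJ*b.imJ + a.imK*b.imK := by
  rw [Quaternion.inner_def]; simp [Quaternion.re_mul]

lemma my_norm (a : ℍ[ℝ]) : ‖a‖^2 = a.re^2 + a.imI^2 + a.imJ^2 + a.imK^2 := by
  rw [sq, ← Quaternion.normSq_eq_norm_mul_self]; simp [Quaternion.normSq_def']

def qmk (a b c d : ℝ) : ℍ[ℝ] := ⟨a, b, c, d⟩

@[simp] lemma qmk_re (a b c d : ℝ) : (qmk a b c d).re = a := rfl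
@[simp] lemma qmk_imI (a b c d : ℝ) : (qmk a b c d).imI = b := rfl
@[simp] lemma qmk_imJ (a b c d : ℝ) : (qmk a b c d).imJ = c := rfl
@[simp] lemma qmk_imK (a b c d : ℝ) : (qmk a b c d).imK = d := rfl

lemma my_unit (I : ℍ[ℝ]) (hI : I ^ 2 = -1) : I.re = 0 ∧ I.imI^2+I.imJ^2+I.imK^2 = 1 := by
  rw [sq, Quaternion.ext_iff] at hI
  simp [Quaternion.re_mul, Quaternion.imI_mul, Quaternion.imJ_mul, Quaternion.imK_mul] at hI
  obtain ⟨h1,h2,h3,h4⟩ := hI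
  have hre : I.re = 0 := by
    nlinarith [sq_nonneg I.re, sq_nonneg (I.re*I.imI), sq_nonneg (I.re*I.imJ), sq_nonneg (I.re*I.imK)]
  exact ⟨hre, by rw [hre] at h1; nlinarith⟩

lemma my_ball (q I : ℍ[ℝ]) (h : q ∈ Metric.ball I (1/2)) :
    (q.re - I.re)^2 + (q.imI - I.imI)^2 + (q.imJ - I.imJ)^2 + (q.imK - I.imK)^2 < 1/4 := by
  rw [Metric.mem_ball, dist_eq_norm] at h
  have h2 : ‖q - I‖^2 < (1/2)^2 := by
    have := pow_lt_pow_left₀ h (norm_nonneg _) (Nat.succ_ne_zero 1)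
    simpa using this
  rw [my_norm] at h2
  simp only [Quaternion.re_sub, Quaternion.imI_sub, Quaternion.imJ_sub, Quaternion.imK_sub] at h2
  nlinarith

/-- The function `f(q) = q² + 1` maps the ball `B(I, 1/2)` centered at an imaginary
unit `I` onto a non-open set: `0` belongs to the image, for every imaginary unit `K`
orthogonal to `I` the intersection of the image with `L_K = ℝ + Kℝ` consists of real
points, and the image contains no open neighborhood of `0`. -/
theorem square_plus_one_not_open (I : ℍ[ℝ]) (hI : I ^ 2 = -1) :
    (0 : ℍ[ℝ]) ∈ (fun q : ℍ[ℝ] => q ^ 2 + 1) '' Metric.ball I (1 / 2) ∧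
    (∀ K : ℍ[ℝ], K ^ 2 = -1 → ⟪I, K⟫ = 0 →
      ((fun q : ℍ[ℝ] => q ^ 2 + 1) '' Metric.ball I (1 / 2)) ∩
          {p | ∃ x y : ℝ, p = (x : ℍ[ℝ]) + y • K} ⊆
        Set.range (fun x : ℝ => (x : ℍ[ℝ]))) ∧
    ¬∃ ε : ℝ, ε > 0 ∧ Metric.ball (0 : ℍ[ℝ]) ε ⊆
      (fun q : ℍ[ℝ] => q ^ 2 + 1) '' Metric.ball I (1 / 2) := by
  obtain ⟨hIre, hInorm⟩ := my_unit I hI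
  have part1 : (0 : ℍ[ℝ]) ∈ (fun q : ℍ[ℝ] => q ^ 2 + 1) '' Metric.ball I (1 / 2) := by
    refine ⟨I, Metric.mem_ball_self (by norm_num), ?_⟩
    show I ^ 2 + 1 = 0
    rw [hI]; exact neg_add_cancel 1
  have part2 : ∀ K : ℍ[ℝ], K ^ 2 = -1 → ⟪I, K⟫ = 0 →
      ((fun q : ℍ[ℝ] => q ^ 2 + 1) '' Metric.ball I (1 / 2)) ∩
          {p | ∃ x y : ℝ, p = (x : ℍ[ℝ]) + y • K} ⊆
        Set.range (fun x : ℝ => (x : ℍ[ℝ])) := by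
    intro K hK hIK p ⟨⟨q, hq, hfq⟩, ⟨x, y, hp⟩⟩
    obtain ⟨hKre, hKnorm⟩ := my_unit K hK
    rw [my_inner, hIre, hKre] at hIK
    have hball := my_ball q I hq
    rw [hIre] at hball
    have heq : q ^ 2 + 1 = (x : ℍ[ℝ]) + y • K := by rw [← hp]; exact hfq
    rw [sq, Quaternion.ext_iff] at heq
    simp only [Quaternion.re_mul, Quaternion.imI_mul, Quaternion.imJ_mul, Quaternion.imK_mul,
      Quaternion.re_add, Quaternion.imI_add, Quaternion.imJ_add, Quaternion.imK_add,
      Quaternion.re_one, Quaternion.imI_one, Quaternion.imJ_one, Quaternion.imK_one,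
      Quaternion.re_coe, Quaternion.imI_coe, Quaternion.imJ_coe, Quaternion.imK_coe,
      Quaternion.re_smul, Quaternion.imI_smul, Quaternion.imJ_smul, Quaternion.imK_smul,
      smul_eq_mul, zero_add, add_zero, hKre, mul_zero] at heq
    obtain ⟨e1, e2, e3, e4⟩ := heq
    -- show y = 0
    have hy : y = 0 := by
      by_cases hw : q.re = 0
      · rw [hw] at e2 e3 e4
        have h0 : y^2 * (K.imI^2 + K.imJ^2 + K.imK^2) = 0 := by
          linear_combination (-(y*K.imI))*e2 + (-(y*K.imJ))*e3 + (-(y*K.imK))*e4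
        rw [hKnorm, mul_one] at h0
        exact pow_eq_zero_iff two_ne_zero |>.mp h0
      · -- s = 0
        have hs : q.re * (I.imI*q.imI + I.imJ*q.imJ + I.imK*q.imK) = 0 := by
          linear_combination (I.imI*e2 + I.imJ*e3 + I.imK*e4 + y*hIK)/2
        have hs0 : I.imI*q.imI + I.imJ*q.imJ + I.imK*q.imK = 0 := by
          rcases mul_eq_zero.mp hs with h | h
          · exact absurd h hw
          · exact h
        exfalso
        nlinarith [hs0, hInorm, sq_nonneg q.re, sq_nonneg q.imI, sq_nonneg q.imJ, sq_nonneg q.imK]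
    rw [hy] at hp
    exact ⟨x, by rw [hp]; simp⟩
  refine ⟨part1, part2, ?_⟩
  rintro ⟨ε, hε, hsub⟩
  -- construct K orthogonal to I
  obtain ⟨K, hK, hIK⟩ : ∃ K : ℍ[ℝ], K ^ 2 = -1 ∧ ⟪I, K⟫ = 0 := by
    by_cases hbc : I.imJ = 0 ∧ I.imK = 0
    · refine ⟨qmk 0 0 1 0, ?_, ?_⟩
      · rw [sq, Quaternion.ext_iff]
        simp [Quaternion.re_mul, Quaternion.imI_mul, Quaternion.imJ_mul, Quaternion.imK_mul]
      · rw [my_inner]; simp [hbc.1, hIre]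
    · have hr : I.imJ^2 + I.imK^2 > 0 := by
        rcases not_and_or.mp hbc with h | h
        · positivity
        · positivity
      set r : ℝ := Real.sqrt (I.imJ^2 + I.imK^2) with hrdef
      have hrpos : r > 0 := Real.sqrt_pos.mpr hr
      have hrsq : r^2 = I.imJ^2 + I.imK^2 := Real.sq_sqrt hr.le
      refine ⟨qmk 0 0 (I.imK/r) (-I.imJ/r), ?_, ?_⟩
      · rw [sq, Quaternion.ext_iff]
        simp only [Quaternion.re_mul, Quaternion.imI_mul, Quaternion.imJ_mul, Quaternion.imK_mul,
          Quaternion.re_neg, Quaternion.imI_neg, Quaternion.imJ_neg, Quaternion.imK_neg,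
          Quaternion.re_one, Quaternion.imI_one, Quaternion.imJ_one, Quaternion.imK_one,
            qmk_re, qmk_imI, qmk_imJ, qmk_imK]
        refine ⟨?_, by ring, by ring, by ring⟩
        field_simp
        nlinarith
      · rw [my_inner]
        show I.re*0 + I.imI*0 + I.imJ*(I.imK/r) + I.imK*(-I.imJ/r) = 0
        ring
  -- the point (ε/2) • K
  have hKnorm : ‖K‖ = 1 := by
    obtain ⟨hKre, hKn⟩ := my_unit K hK
    have h1 : ‖K‖^2 = 1 := by rw [my_norm, hKre]; nlinarith
    have h2 : (‖K‖ - 1) * (‖K‖ + 1) = 0 := by nlinarith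
    rcases mul_eq_zero.mp h2 with h | h
    · linarith
    · nlinarith [norm_nonneg K]
  set p : ℍ[ℝ] := (ε/2) • K with hpdef
  have hpball : p ∈ Metric.ball (0 : ℍ[ℝ]) ε := by
    rw [Metric.mem_ball, dist_zero_right, hpdef, norm_smul, hKnorm, mul_one,
      Real.norm_eq_abs, abs_of_pos (by linarith)]
    linarith
  have hpL : p ∈ {p : ℍ[ℝ] | ∃ x y : ℝ, p = (x : ℍ[ℝ]) + y • K} := ⟨0, ε/2, by simp [hpdef]⟩
  obtain ⟨x₀, hx₀⟩ := part2 K hK hIK ⟨hsub hpball, hpL⟩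
  -- contradiction : K would be real
  have hKr : K = (((ε/2)⁻¹ * x₀ : ℝ) : ℍ[ℝ]) := by
    have : (ε/2) • K = (x₀ : ℍ[ℝ]) := hx₀.symm
    rw [Quaternion.coe_mul]
    rw [← this, Quaternion.coe_mul_eq_smul]
    rw [smul_smul, inv_mul_cancel₀ (by linarith), one_smul]
  rw [hKr] at hK
  rw [← Quaternion.coe_pow] at hK
  have hneg : ((-1 : ℝ) : ℍ[ℝ]) = -1 := by push_cast; ring
  have := Quaternion.coe_injective (hK.trans hneg.symm)
  nlinarith [sq_nonneg ((ε/2)⁻¹ * x₀)]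
end
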